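/- arXiv:2203.13765 — 5 statements merged into one kernel-verified Lean document; each statement's English description precedes it below -/
import Mathlib

section
/- Every proper edge coloring of the complete graph K_6 that is not rainbow (i.e., some two distinct edges of K_6 receive the same color) contains a copy of the double star DS_{2,2} with exactly 3 uniquely colored edges. -/
open SimpleGraph

/-- A proper edge coloring of `G`: edges sharing a vertex receive distinct colors. -/
def IsProperEdgeColoring {V : Type*} (G : SimpleGraph V) (c : Sym2 V → ℕ) : Prop :=
  ∀ e₁ ∈ G.edgeSet, ∀ e₂ ∈ G.edgeSet,
    e₁ ≠ e₂ → (∃ v, v ∈ e₁ ∧ v ∈ e₂) → c e₁ ≠ c e₂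

/-- The set of uniquely colored edges of `F` under the coloring `c`. -/
def uniqueEdges {V : Type*} (F : SimpleGraph V) (c : Sym2 V → ℕ) : Set (Sym2 V) :=
  {e | e ∈ F.edgeSet ∧ ∀ e' ∈ F.edgeSet, c e' = c e → e' = e}

/-- `Spec F` : the set of `k` such that `F` admits a proper edge coloring with
exactly `k` uniquely colored edges. -/
def Spec {V : Type*} (F : SimpleGraph V) : Set ℕ :=
  {k | ∃ c : Sym2 V → ℕ, IsProperEdgeColoring F c ∧ (uniqueEdges F c).ncard = k}

/-- `f` realizes a copy of `H` inside `G`. -/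
def IsCopy {W V : Type*} (H : SimpleGraph W) (G : SimpleGraph V) (f : W → V) : Prop :=
  Function.Injective f ∧ ∀ a b, H.Adj a b → G.Adj (f a) (f b)

/-- Number of uniquely colored edges of the copy of `H` given by `f`. -/
noncomputable def copyUniqueCount {W V : Type*} (H : SimpleGraph W) (c : Sym2 V → ℕ)
    (f : W → V) : ℕ :=
  {e | e ∈ H.edgeSet ∧ ∀ e' ∈ H.edgeSet, c (e'.map f) = c (e.map f) → e' = e}.ncard

def ContainsKUniqueCopy {W V : Type*} (H : SimpleGraph W) (G : SimpleGraph V)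
    (c : Sym2 V → ℕ) (k : ℕ) : Prop :=
  ∃ f : W → V, IsCopy H G f ∧ k ≤ copyUniqueCount H c f

def ContainsExactlyKUniqueCopy {W V : Type*} (H : SimpleGraph W) (G : SimpleGraph V)
    (c : Sym2 V → ℕ) (k : ℕ) : Prop :=
  ∃ f : W → V, IsCopy H G f ∧ copyUniqueCount H c f = k

def ContainsRainbowCopy {W V : Type*} (H : SimpleGraph W) (G : SimpleGraph V)
    (c : Sym2 V → ℕ) : Prop :=
  ∃ f : W → V, IsCopy H G f ∧
    ∀ e₁ ∈ H.edgeSet, ∀ e₂ ∈ H.edgeSet, e₁ ≠ e₂ → c (e₁.map f) ≠ c (e₂.map f)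

/-- The double star `DS_{a,b}`: a dominating edge `y x` with `a` pendant leaves at `y`
and `b` pendant leaves at `x`. -/
def doubleStar (a b : ℕ) : SimpleGraph (Fin 2 ⊕ Fin a ⊕ Fin b) :=
  SimpleGraph.fromEdgeSet
    ({s(Sum.inl 0, Sum.inl 1)} ∪
     {e | ∃ i : Fin a, e = s(Sum.inl 0, Sum.inr (Sum.inl i))} ∪
     {e | ∃ j : Fin b, e = s(Sum.inl 1, Sum.inr (Sum.inr j))})

/-- The caterpillar `C_{a,b,c}`: a path `x₁x₂x₃` with `a`, `b`, `c` pendant leaves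
attached at `x₁`, `x₂`, `x₃` respectively. -/
def caterpillar3 (a b c : ℕ) : SimpleGraph (Fin 3 ⊕ Fin a ⊕ Fin b ⊕ Fin c) :=
  SimpleGraph.fromEdgeSet
    ({s(Sum.inl 0, Sum.inl 1), s(Sum.inl 1, Sum.inl 2)} ∪
     {e | ∃ i : Fin a, e = s(Sum.inl 0, Sum.inr (Sum.inl i))} ∪
     {e | ∃ i : Fin b, e = s(Sum.inl 1, Sum.inr (Sum.inr (Sum.inl i)))} ∪
     {e | ∃ i : Fin c, e = s(Sum.inl 2, Sum.inr (Sum.inr (Sum.inr i)))})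

/-- The rooted tree of depth 2 whose root has `k` children, each with `m` pendant
leaves. -/
def depth2Tree (k m : ℕ) : SimpleGraph (Unit ⊕ Fin k ⊕ Fin k × Fin m) :=
  SimpleGraph.fromEdgeSet
    ({e | ∃ i : Fin k, e = s(Sum.inl (), Sum.inr (Sum.inl i))} ∪
     {e | ∃ (i : Fin k) (j : Fin m),
        e = s(Sum.inr (Sum.inl i), Sum.inr (Sum.inr (i, j)))})


lemma ds22_edgeSet : (doubleStar 2 2).edgeSet =
    {s(Sum.inl 0, Sum.inl 1), s(Sum.inl 0, Sum.inr (Sum.inl 0)),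
     s(Sum.inl 0, Sum.inr (Sum.inl 1)), s(Sum.inl 1, Sum.inr (Sum.inr 0)),
     s(Sum.inl 1, Sum.inr (Sum.inr 1))} := by
  rw [doubleStar, edgeSet_fromEdgeSet]
  ext e
  simp [Fin.exists_fin_two, Set.mem_diff]
  constructor
  · rintro ⟨h | h | h, hd⟩ <;> tauto
  · rintro (rfl | rfl | rfl | rfl | rfl) <;> refine ⟨by tauto, by decide⟩

/-- In a proper coloring of `⊤`, edges sharing vertex `x` get distinct colors. -/
lemma k6_prop_ne {c : Sym2 (Fin 6) → ℕ}
    (hc : IsProperEdgeColoring (⊤ : SimpleGraph (Fin 6)) c)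
    {x y z : Fin 6} (hxy : x ≠ y) (hxz : x ≠ z) (hyz : y ≠ z) :
    c s(x, y) ≠ c s(x, z) := by
  apply hc
  · simp [hxy]
  · simp [hxz]
  · simp [Sym2.eq_iff]; tauto
  · exact ⟨x, by simp⟩

lemma k6_key (c : Sym2 (Fin 6) → ℕ)
    (hc : IsProperEdgeColoring (⊤ : SimpleGraph (Fin 6)) c)
    (a b u v p q : Fin 6)
    (hab : a ≠ b) (hau : a ≠ u) (hav : a ≠ v) (hap : a ≠ p) (haq : a ≠ q)
    (hbu : b ≠ u) (hbv : b ≠ v) (hbp : b ≠ p) (hbq : b ≠ q)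
    (huv : u ≠ v) (hup : u ≠ p) (huq : u ≠ q)
    (hvp : v ≠ p) (hvq : v ≠ q) (hpq : p ≠ q)
    (hcol : c s(a, b) = c s(u, v)) (hne2 : c s(a, p) ≠ c s(u, q)) :
    ContainsExactlyKUniqueCopy (doubleStar 2 2) (⊤ : SimpleGraph (Fin 6)) c 3 := by
  refine ⟨Sum.elim ![a, u] (Sum.elim ![b, p] ![v, q]), ⟨?_, ?_⟩, ?_⟩
  · intro x y h
    fin_cases x <;> fin_cases y <;> simp_all
  · have hinj : Function.Injective (Sum.elim ![a, u] (Sum.elim ![b, p] ![v, q])) := by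
      intro x y h
      fin_cases x <;> fin_cases y <;> simp_all
    exact fun x y h => (top_adj _ _).mpr fun he => h.ne (hinj he)
  · rw [copyUniqueCount]
    have hset : {e | e ∈ (doubleStar 2 2).edgeSet ∧ ∀ e' ∈ (doubleStar 2 2).edgeSet,
        c (e'.map (Sum.elim ![a, u] (Sum.elim ![b, p] ![v, q]))) =
        c (e.map (Sum.elim ![a, u] (Sum.elim ![b, p] ![v, q]))) → e' = e} =
        {s(Sum.inl 0, Sum.inl 1), s(Sum.inl 0, Sum.inr (Sum.inl 1)),
         s(Sum.inl 1, Sum.inr (Sum.inr 1))} := by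
      have h1 : c s(a,u) ≠ c s(a,b) := k6_prop_ne hc hau hab (Ne.symm hbu)
      have h2 : c s(a,u) ≠ c s(a,p) := k6_prop_ne hc hau hap hup
      have h3 : c s(a,u) ≠ c s(u,v) := by
        rw [Sym2.eq_swap]; exact k6_prop_ne hc (fun h => hau h.symm) huv hav
      have h4 : c s(a,u) ≠ c s(u,q) := by
        rw [Sym2.eq_swap]; exact k6_prop_ne hc (fun h => hau h.symm) huq haq
      have h5 : c s(a,b) ≠ c s(a,p) := k6_prop_ne hc hab hap hbp
      have h6 : c s(a,b) ≠ c s(u,q) := hcol ▸ k6_prop_ne hc huv huq hvq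
      have h7 : c s(a,p) ≠ c s(u,v) := fun h => h5 (hcol.trans h.symm)
      have h8 : c s(u,v) ≠ c s(u,q) := k6_prop_ne hc huv huq hvq
      ext e
      simp only [ds22_edgeSet, Set.mem_setOf_eq, Set.mem_insert_iff, Set.mem_singleton_iff]
      constructor
      · rintro ⟨(rfl | rfl | rfl | rfl | rfl), hu⟩
        · tauto
        · exfalso
          have := hu s(Sum.inl 1, Sum.inr (Sum.inr 0)) (by tauto) (by simp [hcol.symm])
          simp at this
        · tauto
        · exfalso
          have := hu s(Sum.inl 0, Sum.inr (Sum.inl 0)) (by tauto) (by simp [hcol])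
          simp at this
        · tauto
      · rintro (rfl | rfl | rfl)
        · refine ⟨by tauto, ?_⟩
          rintro e' (rfl | rfl | rfl | rfl | rfl) h <;> simp_all
        · refine ⟨by tauto, ?_⟩
          rintro e' (rfl | rfl | rfl | rfl | rfl) h <;> simp_all
        · refine ⟨by tauto, ?_⟩
          rintro e' (rfl | rfl | rfl | rfl | rfl) h <;> simp_all
    rw [hset]
    rw [Set.ncard_insert_of_notMem (by decide), Set.ncard_insert_of_notMem (by decide),
        Set.ncard_singleton]

/-- Every proper edge coloring of `K₆` that is not rainbow (two
distinct edges share a color) contains a copy of `DS_{2,2}` with exactly 3 uniquely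
colored edges. -/
theorem K6_not_rainbow_has_exactly3unique_DS22 (c : Sym2 (Fin 6) → ℕ)
    (hc : IsProperEdgeColoring (⊤ : SimpleGraph (Fin 6)) c)
    (hnr : ∃ e₁ ∈ (⊤ : SimpleGraph (Fin 6)).edgeSet,
      ∃ e₂ ∈ (⊤ : SimpleGraph (Fin 6)).edgeSet, e₁ ≠ e₂ ∧ c e₁ = c e₂) :
    ContainsExactlyKUniqueCopy (doubleStar 2 2) (⊤ : SimpleGraph (Fin 6)) c 3 := by

  obtain ⟨e₁, he₁, e₂, he₂, hne, hcc⟩ := hnr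
  revert he₁ he₂ hne hcc
  induction e₁ using Sym2.ind with | _ a b => ?_
  induction e₂ using Sym2.ind with | _ u v => ?_
  intro he₁ he₂ hne hcc
  simp only [mem_edgeSet, top_adj] at he₁ he₂
  have hdisj : ∀ x : Fin 6, x ∈ s(a,b) → x ∉ s(u,v) :=
    fun x hx hz => hc _ (by simpa using he₁) _ (by simpa using he₂) hne ⟨x, hx, hz⟩ hcc
  have hau : a ≠ u := fun h => hdisj a (by simp) (by simp [h])
  have hav : a ≠ v := fun h => hdisj a (by simp) (by simp [h])
  have hbu : b ≠ u := fun h => hdisj b (by simp) (by simp [h])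
  have hbv : b ≠ v := fun h => hdisj b (by simp) (by simp [h])
  have c1 : ({a,b,u,v} : Finset (Fin 6)).card ≤ 4 := by
    have := Finset.card_insert_le a ({b,u,v} : Finset (Fin 6))
    have := Finset.card_insert_le b ({u,v} : Finset (Fin 6))
    have := Finset.card_insert_le u ({v} : Finset (Fin 6))
    simp only [Finset.card_singleton] at *
    omega
  have c2 : 1 < ({a,b,u,v}ᶜ : Finset (Fin 6)).card := by
    rw [Finset.card_compl]
    simp only [Fintype.card_fin]
    omega
  obtain ⟨p, hp, q, hq, hpq⟩ := Finset.one_lt_card.mp c2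
  simp only [Finset.mem_compl, Finset.mem_insert, Finset.mem_singleton, not_or] at hp hq
  obtain ⟨hpa, hpb, hpu, hpv⟩ := hp
  obtain ⟨hqa, hqb, hqu, hqv⟩ := hq
  by_cases hcase : c s(a, p) = c s(u, q)
  · refine k6_key c hc b a u v p q (Ne.symm he₁) hbu hbv (Ne.symm hpb) (Ne.symm hqb)
      hau hav (Ne.symm hpa) (Ne.symm hqa) he₂ (Ne.symm hpu) (Ne.symm hqu)
      (Ne.symm hpv) (Ne.symm hqv) hpq (by rw [Sym2.eq_swap]; exact hcc) ?_
    intro h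
    have hne3 : c s(p, a) ≠ c s(p, b) := k6_prop_ne hc hpa hpb he₁
    exact hne3 (by rw [show s(p,a) = s(a,p) from Sym2.eq_swap, hcase, ← h,
      show s(b,p) = s(p,b) from Sym2.eq_swap])
  · exact k6_key c hc a b u v p q he₁ hau hav (Ne.symm hpa) (Ne.symm hqa)
      hbu hbv (Ne.symm hpb) (Ne.symm hqb) he₂ (Ne.symm hpu) (Ne.symm hqu)
      (Ne.symm hpv) (Ne.symm hqv) hpq hcc hcase
end

section
/- For every n divisible by 6 there exists a simple graph G on n vertices with exactly 5n/2 edges together with a proper edge coloring of G containing no rainbow copy of DS_{2,2}; moreover, for every n, every simple graph on n vertices with more than 3n edges has the property that every proper edge coloring contains a rainbow copy of DS_{2,2}. (In other words, 5n/2 ≤ ex⋆(n, DS_{2,2}) ≤ 6n/2.) -/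
open SimpleGraph

def chi (a b : ℕ) : ℕ :=
  if a = 5 then (2*b) % 5 else if b = 5 then (2*a) % 5 else (a+b) % 5

lemma chi_symm (a b : ℕ) : chi a b = chi b a := by
  unfold chi; split_ifs with h1 h2 h3 <;> simp_all [Nat.add_comm]

lemma chi_proper : ∀ x a b : Fin 6, x ≠ a → x ≠ b → a ≠ b →
    chi x.val a.val ≠ chi x.val b.val := by decide

set_option maxHeartbeats 4000000 in
set_option synthInstance.maxSize 2000 in
set_option synthInstance.maxHeartbeats 1000000 in
lemma chi_norainbow : ∀ r0 r1 r2 r3 r4 r5 : Fin 6,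
    (r0 ≠ r1 ∧ r0 ≠ r2 ∧ r0 ≠ r3 ∧ r0 ≠ r4 ∧ r0 ≠ r5 ∧
     r1 ≠ r2 ∧ r1 ≠ r3 ∧ r1 ≠ r4 ∧ r1 ≠ r5 ∧
     r2 ≠ r3 ∧ r2 ≠ r4 ∧ r2 ≠ r5 ∧
     r3 ≠ r4 ∧ r3 ≠ r5 ∧ r4 ≠ r5) →
    ¬ (chi r0.val r1.val ≠ chi r0.val r2.val ∧ chi r0.val r1.val ≠ chi r0.val r3.val ∧
       chi r0.val r1.val ≠ chi r1.val r4.val ∧ chi r0.val r1.val ≠ chi r1.val r5.val ∧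
       chi r0.val r2.val ≠ chi r0.val r3.val ∧ chi r0.val r2.val ≠ chi r1.val r4.val ∧
       chi r0.val r2.val ≠ chi r1.val r5.val ∧ chi r0.val r3.val ≠ chi r1.val r4.val ∧
       chi r0.val r3.val ≠ chi r1.val r5.val ∧ chi r1.val r4.val ≠ chi r1.val r5.val) := by
  decide

def blockGraph (n : ℕ) : SimpleGraph (Fin n) where
  Adj u v := u ≠ v ∧ u.val / 6 = v.val / 6
  symm := by constructor; intro u v h; exact ⟨h.1.symm, h.2.symm⟩
  loopless := by constructor; intro u h; exact h.1 rfl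

instance (n : ℕ) : DecidableRel (blockGraph n).Adj :=
  fun u v => inferInstanceAs (Decidable (u ≠ v ∧ u.val / 6 = v.val / 6))

lemma blockGraph_degree {n : ℕ} (hn : 6 ∣ n) (v : Fin n) : (blockGraph n).degree v = 5 := by
  obtain ⟨m, rfl⟩ := hn
  have hlt : ∀ i : Fin 6, 6 * (v.val / 6) + i.val < 6 * m := by
    intro i; have := v.isLt; omega
  have himg : (blockGraph (6*m)).neighborFinset v =
      (Finset.univ.image (fun i : Fin 6 => (⟨6 * (v.val / 6) + i.val, hlt i⟩ : Fin (6*m)))).erase v := by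
    ext w
    simp only [mem_neighborFinset, Finset.mem_erase, Finset.mem_image, Finset.mem_univ, true_and]
    constructor
    · rintro ⟨hne, hdiv⟩
      refine ⟨hne.symm, ⟨⟨w.val % 6, Nat.mod_lt _ (by norm_num)⟩, ?_⟩⟩
      apply Fin.ext; simp; omega
    · rintro ⟨hne, ⟨i, rfl⟩⟩
      refine ⟨Ne.symm hne, ?_⟩
      simp; omega
  rw [SimpleGraph.degree, himg]
  have hmem : v ∈ Finset.univ.image (fun i : Fin 6 => (⟨6 * (v.val / 6) + i.val, hlt i⟩ : Fin (6*m))) := by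
    refine Finset.mem_image.mpr ⟨⟨v.val % 6, Nat.mod_lt _ (by norm_num)⟩, Finset.mem_univ _, ?_⟩
    apply Fin.ext; simp; omega
  rw [Finset.card_erase_of_mem hmem, Finset.card_image_of_injective _ ?_]
  · simp
  · intro i j hij
    have := Fin.mk.injEq .. ▸ hij
    apply Fin.ext
    have : 6 * (v.val / 6) + i.val = 6 * (v.val / 6) + j.val := Fin.mk.inj_iff.mp hij
    omega

lemma blockGraph_card {n : ℕ} (hn : 6 ∣ n) : (blockGraph n).edgeSet.ncard = 5 * n / 2 := by
  have h2 := SimpleGraph.sum_degrees_eq_twice_card_edges (blockGraph n)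
  have hsum : ∑ v : Fin n, (blockGraph n).degree v = 5 * n := by
    rw [Finset.sum_congr rfl (fun v _ => blockGraph_degree hn v)]
    simp [Finset.sum_const, Nat.mul_comm]
  rw [← Set.ncard_coe_finset, SimpleGraph.coe_edgeFinset] at h2
  omega

def blockColor (n : ℕ) : Sym2 (Fin n) → ℕ :=
  Sym2.lift ⟨fun u v => chi (u.val % 6) (v.val % 6), fun u v => chi_symm _ _⟩

lemma blockColor_mk {n : ℕ} (u v : Fin n) :
    blockColor n s(u, v) = chi (u.val % 6) (v.val % 6) := rfl


lemma blockColor_proper (n : ℕ) : IsProperEdgeColoring (blockGraph n) (blockColor n) := by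
  rintro e1 he1 e2 he2 hne ⟨v, hv1, hv2⟩
  obtain ⟨a, rfl⟩ := Sym2.mem_iff_exists.mp hv1
  obtain ⟨b, rfl⟩ := Sym2.mem_iff_exists.mp hv2
  rw [SimpleGraph.mem_edgeSet] at he1 he2
  have hab : a ≠ b := fun h => hne (by rw [h])
  have hva : v.val ≠ a.val := fun h => he1.1 (Fin.ext h)
  have hvb : v.val ≠ b.val := fun h => he2.1 (Fin.ext h)
  have hab' : a.val ≠ b.val := fun h => hab (Fin.ext h)
  have h1 := he1.2; have h2 := he2.2
  rw [blockColor_mk, blockColor_mk]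
  exact chi_proper ⟨v.val % 6, Nat.mod_lt _ (by norm_num)⟩
    ⟨a.val % 6, Nat.mod_lt _ (by norm_num)⟩ ⟨b.val % 6, Nat.mod_lt _ (by norm_num)⟩
    (fun h => by have := congrArg Fin.val h; simp at this; omega)
    (fun h => by have := congrArg Fin.val h; simp at this; omega)
    (fun h => by have := congrArg Fin.val h; simp at this; omega)

abbrev DSV := Fin 2 ⊕ Fin 2 ⊕ Fin 2
abbrev E1 : Sym2 DSV := s(Sum.inl 0, Sum.inl 1)
abbrev E2 : Sym2 DSV := s(Sum.inl 0, Sum.inr (Sum.inl 0))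
abbrev E3 : Sym2 DSV := s(Sum.inl 0, Sum.inr (Sum.inl 1))
abbrev E4 : Sym2 DSV := s(Sum.inl 1, Sum.inr (Sum.inr 0))
abbrev E5 : Sym2 DSV := s(Sum.inl 1, Sum.inr (Sum.inr 1))

lemma ds_edgeSet : (doubleStar 2 2).edgeSet = {E1, E2, E3, E4, E5} := by
  rw [doubleStar, edgeSet_fromEdgeSet]
  ext e
  simp only [Set.mem_diff, Set.mem_union, Set.mem_singleton_iff, Set.mem_setOf_eq,
    Fin.exists_fin_two, Set.mem_insert_iff, E1, E2, E3, E4, E5]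
  constructor
  · rintro ⟨(h | h) | h, -⟩ <;> tauto
  · intro h
    have hd : ¬ e.IsDiag := by
      rcases h with rfl | rfl | rfl | rfl | rfl <;> decide
    exact ⟨by tauto, hd⟩

lemma ds_adj_cases {a b : DSV} (h : (doubleStar 2 2).Adj a b) :
    ((a = Sum.inl 0 ∧ b = Sum.inl 1) ∨ (a = Sum.inl 1 ∧ b = Sum.inl 0) ∨
     (a = Sum.inl 0 ∧ b = Sum.inr (Sum.inl 0)) ∨ (a = Sum.inr (Sum.inl 0) ∧ b = Sum.inl 0) ∨
     (a = Sum.inl 0 ∧ b = Sum.inr (Sum.inl 1)) ∨ (a = Sum.inr (Sum.inl 1) ∧ b = Sum.inl 0) ∨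
     (a = Sum.inl 1 ∧ b = Sum.inr (Sum.inr 0)) ∨ (a = Sum.inr (Sum.inr 0) ∧ b = Sum.inl 1) ∨
     (a = Sum.inl 1 ∧ b = Sum.inr (Sum.inr 1)) ∨ (a = Sum.inr (Sum.inr 1) ∧ b = Sum.inl 1)) := by
  rw [← SimpleGraph.mem_edgeSet, ds_edgeSet] at h
  simp only [Set.mem_insert_iff, Set.mem_singleton_iff, E1, E2, E3, E4, E5, Sym2.eq_iff] at h
  rcases h with ((⟨rfl,rfl⟩|⟨rfl,rfl⟩)|(⟨rfl,rfl⟩|⟨rfl,rfl⟩)|(⟨rfl,rfl⟩|⟨rfl,rfl⟩)|(⟨rfl,rfl⟩|⟨rfl,rfl⟩)|(⟨rfl,rfl⟩|⟨rfl,rfl⟩)) <;> decide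

lemma ds_mem_E1 : E1 ∈ (doubleStar 2 2).edgeSet := by rw [ds_edgeSet]; simp
lemma ds_mem_E2 : E2 ∈ (doubleStar 2 2).edgeSet := by rw [ds_edgeSet]; simp
lemma ds_mem_E3 : E3 ∈ (doubleStar 2 2).edgeSet := by rw [ds_edgeSet]; simp
lemma ds_mem_E4 : E4 ∈ (doubleStar 2 2).edgeSet := by rw [ds_edgeSet]; simp
lemma ds_mem_E5 : E5 ∈ (doubleStar 2 2).edgeSet := by rw [ds_edgeSet]; simp



lemma mod6_ne {a b : ℕ} (h : a ≠ b) (hd : a / 6 = b / 6) : a % 6 ≠ b % 6 := by omega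

lemma chi_step (Y X Y1 Y2 X1 X2 : ℕ)
    (bX : Y / 6 = X / 6) (bY1 : Y / 6 = Y1 / 6) (bY2 : Y / 6 = Y2 / 6)
    (bX1 : X / 6 = X1 / 6) (bX2 : X / 6 = X2 / 6)
    (d01 : Y ≠ X) (d02 : Y ≠ Y1) (d03 : Y ≠ Y2) (d04 : Y ≠ X1) (d05 : Y ≠ X2)
    (d12 : X ≠ Y1) (d13 : X ≠ Y2) (d14 : X ≠ X1) (d15 : X ≠ X2)
    (d23 : Y1 ≠ Y2) (d24 : Y1 ≠ X1) (d25 : Y1 ≠ X2)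
    (d34 : Y2 ≠ X1) (d35 : Y2 ≠ X2) (d45 : X1 ≠ X2)
    (c1 : chi (Y % 6) (X % 6) ≠ chi (Y % 6) (Y1 % 6))
    (c2 : chi (Y % 6) (X % 6) ≠ chi (Y % 6) (Y2 % 6))
    (c3 : chi (Y % 6) (X % 6) ≠ chi (X % 6) (X1 % 6))
    (c4 : chi (Y % 6) (X % 6) ≠ chi (X % 6) (X2 % 6))
    (c5 : chi (Y % 6) (Y1 % 6) ≠ chi (Y % 6) (Y2 % 6))
    (c6 : chi (Y % 6) (Y1 % 6) ≠ chi (X % 6) (X1 % 6))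
    (c7 : chi (Y % 6) (Y1 % 6) ≠ chi (X % 6) (X2 % 6))
    (c8 : chi (Y % 6) (Y2 % 6) ≠ chi (X % 6) (X1 % 6))
    (c9 : chi (Y % 6) (Y2 % 6) ≠ chi (X % 6) (X2 % 6))
    (c10 : chi (X % 6) (X1 % 6) ≠ chi (X % 6) (X2 % 6)) : False := by
  exact chi_norainbow ⟨Y % 6, Nat.mod_lt _ (by norm_num)⟩ ⟨X % 6, Nat.mod_lt _ (by norm_num)⟩
    ⟨Y1 % 6, Nat.mod_lt _ (by norm_num)⟩ ⟨Y2 % 6, Nat.mod_lt _ (by norm_num)⟩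
    ⟨X1 % 6, Nat.mod_lt _ (by norm_num)⟩ ⟨X2 % 6, Nat.mod_lt _ (by norm_num)⟩
    ⟨Fin.ne_of_val_ne (mod6_ne d01 bX),
     Fin.ne_of_val_ne (mod6_ne d02 bY1),
     Fin.ne_of_val_ne (mod6_ne d03 bY2),
     Fin.ne_of_val_ne (mod6_ne d04 (bX.trans bX1)),
     Fin.ne_of_val_ne (mod6_ne d05 (bX.trans bX2)),
     Fin.ne_of_val_ne (mod6_ne d12 (bX.symm.trans bY1)),
     Fin.ne_of_val_ne (mod6_ne d13 (bX.symm.trans bY2)),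
     Fin.ne_of_val_ne (mod6_ne d14 bX1),
     Fin.ne_of_val_ne (mod6_ne d15 bX2),
     Fin.ne_of_val_ne (mod6_ne d23 (bY1.symm.trans bY2)),
     Fin.ne_of_val_ne (mod6_ne d24 (bY1.symm.trans (bX.trans bX1))),
     Fin.ne_of_val_ne (mod6_ne d25 (bY1.symm.trans (bX.trans bX2))),
     Fin.ne_of_val_ne (mod6_ne d34 (bY2.symm.trans (bX.trans bX1))),
     Fin.ne_of_val_ne (mod6_ne d35 (bY2.symm.trans (bX.trans bX2))),
     Fin.ne_of_val_ne (mod6_ne d45 (bX1.symm.trans bX2))⟩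
    ⟨c1, c2, c3, c4, c5, c6, c7, c8, c9, c10⟩


lemma blockGraph_norainbow (n : ℕ) :
    ¬ ContainsRainbowCopy (doubleStar 2 2) (blockGraph n) (blockColor n) := by
  rintro ⟨f, ⟨finj, fadj⟩, hr⟩
  have adj1 : (doubleStar 2 2).Adj (Sum.inl 0) (Sum.inl 1) :=
    (SimpleGraph.mem_edgeSet _).mp ds_mem_E1
  have adj2 : (doubleStar 2 2).Adj (Sum.inl 0) (Sum.inr (Sum.inl 0)) :=
    (SimpleGraph.mem_edgeSet _).mp ds_mem_E2
  have adj3 : (doubleStar 2 2).Adj (Sum.inl 0) (Sum.inr (Sum.inl 1)) :=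
    (SimpleGraph.mem_edgeSet _).mp ds_mem_E3
  have adj4 : (doubleStar 2 2).Adj (Sum.inl 1) (Sum.inr (Sum.inr 0)) :=
    (SimpleGraph.mem_edgeSet _).mp ds_mem_E4
  have adj5 : (doubleStar 2 2).Adj (Sum.inl 1) (Sum.inr (Sum.inr 1)) :=
    (SimpleGraph.mem_edgeSet _).mp ds_mem_E5
  have aYX := fadj _ _ adj1
  have aYY1 := fadj _ _ adj2
  have aYY2 := fadj _ _ adj3
  have aXX1 := fadj _ _ adj4
  have aXX2 := fadj _ _ adj5
  set Y := f (Sum.inl 0)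
  set X := f (Sum.inl 1)
  set Y1 := f (Sum.inr (Sum.inl 0))
  set Y2 := f (Sum.inr (Sum.inl 1))
  set X1 := f (Sum.inr (Sum.inr 0))
  set X2 := f (Sum.inr (Sum.inr 1))
  have bX : Y.val / 6 = X.val / 6 := aYX.2
  have bY1 : Y.val / 6 = Y1.val / 6 := aYY1.2
  have bY2 : Y.val / 6 = Y2.val / 6 := aYY2.2
  have bX1 : X.val / 6 = X1.val / 6 := aXX1.2
  have bX2 : X.val / 6 = X2.val / 6 := aXX2.2
  have hfne : ∀ {a b : DSV}, a ≠ b → (f a).val ≠ (f b).val :=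
    fun h h' => h (finj (Fin.ext h'))
  have d01 : Y.val ≠ X.val := hfne (by decide)
  have d02 : Y.val ≠ Y1.val := hfne (by decide)
  have d03 : Y.val ≠ Y2.val := hfne (by decide)
  have d04 : Y.val ≠ X1.val := hfne (by decide)
  have d05 : Y.val ≠ X2.val := hfne (by decide)
  have d12 : X.val ≠ Y1.val := hfne (by decide)
  have d13 : X.val ≠ Y2.val := hfne (by decide)
  have d14 : X.val ≠ X1.val := hfne (by decide)
  have d15 : X.val ≠ X2.val := hfne (by decide)
  have d23 : Y1.val ≠ Y2.val := hfne (by decide)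
  have d24 : Y1.val ≠ X1.val := hfne (by decide)
  have d25 : Y1.val ≠ X2.val := hfne (by decide)
  have d34 : Y2.val ≠ X1.val := hfne (by decide)
  have d35 : Y2.val ≠ X2.val := hfne (by decide)
  have d45 : X1.val ≠ X2.val := hfne (by decide)
  have six : ∀ a : Fin n, a.val % 6 < 6 := fun a => Nat.mod_lt _ (by norm_num)
  have c1 := hr E1 ds_mem_E1 E2 ds_mem_E2 (by decide)
  have c2 := hr E1 ds_mem_E1 E3 ds_mem_E3 (by decide)
  have c3 := hr E1 ds_mem_E1 E4 ds_mem_E4 (by decide)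
  have c4 := hr E1 ds_mem_E1 E5 ds_mem_E5 (by decide)
  have c5 := hr E2 ds_mem_E2 E3 ds_mem_E3 (by decide)
  have c6 := hr E2 ds_mem_E2 E4 ds_mem_E4 (by decide)
  have c7 := hr E2 ds_mem_E2 E5 ds_mem_E5 (by decide)
  have c8 := hr E3 ds_mem_E3 E4 ds_mem_E4 (by decide)
  have c9 := hr E3 ds_mem_E3 E5 ds_mem_E5 (by decide)
  have c10 := hr E4 ds_mem_E4 E5 ds_mem_E5 (by decide)
  simp only [Sym2.map_pair_eq, blockColor_mk] at c1 c2 c3 c4 c5 c6 c7 c8 c9 c10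
  exact chi_step Y.val X.val Y1.val Y2.val X1.val X2.val bX bY1 bY2 bX1 bX2
    d01 d02 d03 d04 d05 d12 d13 d14 d15 d23 d24 d25 d34 d35 d45
    c1 c2 c3 c4 c5 c6 c7 c8 c9 c10

lemma proper_ne {V : Type*} {G : SimpleGraph V} {c : Sym2 V → ℕ}
    (hc : IsProperEdgeColoring G c) {a b b' : V}
    (h1 : G.Adj a b) (h2 : G.Adj a b') (hbb' : b ≠ b') : c s(a, b) ≠ c s(a, b') :=
  hc _ (G.mem_edgeSet.mpr h1) _ (G.mem_edgeSet.mpr h2)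
    (fun h => hbb' (Sym2.congr_right.mp h)) ⟨a, by simp, by simp⟩


lemma key_edge {n : ℕ} (G : SimpleGraph (Fin n)) [DecidableRel G.Adj]
    (he : 3 * n < G.edgeSet.ncard) :
    ∃ x y, G.Adj x y ∧ 7 ≤ G.degree x ∧ 4 ≤ G.degree y := by
  classical
  by_contra hk
  push_neg at hk
  have hee : G.edgeSet.ncard = G.edgeFinset.card := by
    rw [← SimpleGraph.coe_edgeFinset, Set.ncard_coe_finset]
  have h2e : ∑ v : Fin n, G.degree v = 2 * G.edgeFinset.card :=
    SimpleGraph.sum_degrees_eq_twice_card_edges G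
  have hdeg : ∀ v : Fin n, G.degree v = ∑ w : Fin n, if G.Adj v w then 1 else 0 := by
    intro v
    rw [show G.degree v = (Finset.univ.filter (G.Adj v)).card from by
      rw [← SimpleGraph.neighborFinset_eq_filter]; rfl]
    exact Finset.card_filter _ _
  have hsplit : ∑ v : Fin n, G.degree v =
      ∑ v ∈ Finset.univ.filter (fun v : Fin n => G.degree v ≤ 3), G.degree v +
      (∑ v ∈ (Finset.univ.filter (fun v : Fin n => ¬ G.degree v ≤ 3)).filter
          (fun v => G.degree v ≤ 6), G.degree v +
       ∑ v ∈ Finset.univ.filter (fun v : Fin n => ¬ G.degree v ≤ 6), G.degree v) := by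
    rw [← Finset.sum_filter_add_sum_filter_not Finset.univ (fun v => G.degree v ≤ 3)
        (fun v => G.degree v),
      ← Finset.sum_filter_add_sum_filter_not
        (Finset.univ.filter (fun v : Fin n => ¬ G.degree v ≤ 3)) (fun v => G.degree v ≤ 6)
        (fun v => G.degree v)]
    have hLL : (Finset.univ.filter (fun v : Fin n => ¬ G.degree v ≤ 3)).filter
        (fun v => ¬ G.degree v ≤ 6) = Finset.univ.filter (fun v : Fin n => ¬ G.degree v ≤ 6) := by
      rw [Finset.filter_filter]
      ext v
      simp only [Finset.mem_filter, Finset.mem_univ, true_and]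
      omega
    rw [hLL]
  have hScard : ∑ v ∈ Finset.univ.filter (fun v : Fin n => G.degree v ≤ 3), G.degree v ≤
      3 * (Finset.univ.filter (fun v : Fin n => G.degree v ≤ 3)).card := by
    rw [Nat.mul_comm]
    exact Finset.sum_le_card_nsmul _ _ 3 (fun v hv => (Finset.mem_filter.mp hv).2)
  have hMcard : ∑ v ∈ (Finset.univ.filter (fun v : Fin n => ¬ G.degree v ≤ 3)).filter
      (fun v => G.degree v ≤ 6), G.degree v ≤
      6 * ((Finset.univ.filter (fun v : Fin n => ¬ G.degree v ≤ 3)).filter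
      (fun v => G.degree v ≤ 6)).card := by
    rw [Nat.mul_comm]
    exact Finset.sum_le_card_nsmul _ _ 6 (fun v hv => (Finset.mem_filter.mp hv).2)
  have hLS : ∑ v ∈ Finset.univ.filter (fun v : Fin n => ¬ G.degree v ≤ 6), G.degree v ≤
      ∑ v ∈ Finset.univ.filter (fun v : Fin n => G.degree v ≤ 3), G.degree v := by
    calc ∑ v ∈ Finset.univ.filter (fun v : Fin n => ¬ G.degree v ≤ 6), G.degree v
        = ∑ v ∈ Finset.univ.filter (fun v : Fin n => ¬ G.degree v ≤ 6),
            ∑ w : Fin n, if G.Adj v w then 1 else 0 :=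
          Finset.sum_congr rfl (fun v _ => hdeg v)
      _ = ∑ w : Fin n, ∑ v ∈ Finset.univ.filter (fun v : Fin n => ¬ G.degree v ≤ 6),
            if G.Adj v w then 1 else 0 := Finset.sum_comm
      _ = ∑ w : Fin n, ((Finset.univ.filter (fun v : Fin n => ¬ G.degree v ≤ 6)).filter
            (fun v => G.Adj v w)).card :=
          Finset.sum_congr rfl (fun w _ => (Finset.card_filter _ _).symm)
      _ ≤ ∑ w : Fin n, (if G.degree w ≤ 3 then G.degree w else 0) := by
          refine Finset.sum_le_sum (fun w _ => ?_)
          by_cases hw : ((Finset.univ.filter (fun v : Fin n => ¬ G.degree v ≤ 6)).filter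
              (fun v => G.Adj v w)).Nonempty
          · obtain ⟨v, hv⟩ := hw
            rw [Finset.mem_filter, Finset.mem_filter] at hv
            obtain ⟨⟨-, hv7⟩, hvw⟩ := hv
            have h3 : G.degree w < 4 := hk v w hvw (by omega)
            rw [if_pos (by omega)]
            have hsub : (Finset.univ.filter (fun v : Fin n => ¬ G.degree v ≤ 6)).filter
                (fun v => G.Adj v w) ⊆ G.neighborFinset w := by
              intro u hu
              rw [Finset.mem_filter] at hu
              exact (SimpleGraph.mem_neighborFinset _ _ _).mpr hu.2.symm
            exact Finset.card_le_card hsub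
          · rw [Finset.not_nonempty_iff_eq_empty] at hw
            rw [hw]; simp
      _ = ∑ w ∈ Finset.univ.filter (fun v : Fin n => G.degree v ≤ 3), G.degree w := by
          rw [Finset.sum_filter]
  have hSM : (Finset.univ.filter (fun v : Fin n => G.degree v ≤ 3)).card +
      ((Finset.univ.filter (fun v : Fin n => ¬ G.degree v ≤ 3)).filter
      (fun v => G.degree v ≤ 6)).card ≤ n := by
    have hdisj : Disjoint (Finset.univ.filter (fun v : Fin n => G.degree v ≤ 3))
        ((Finset.univ.filter (fun v : Fin n => ¬ G.degree v ≤ 3)).filter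
        (fun v => G.degree v ≤ 6)) := by
      rw [Finset.disjoint_left]
      intro v hv hv'
      rw [Finset.mem_filter] at hv
      rw [Finset.mem_filter, Finset.mem_filter] at hv'
      omega
    calc _ = (Finset.univ.filter (fun v : Fin n => G.degree v ≤ 3) ∪
          (Finset.univ.filter (fun v : Fin n => ¬ G.degree v ≤ 3)).filter
          (fun v => G.degree v ≤ 6)).card := (Finset.card_union_of_disjoint hdisj).symm
      _ ≤ (Finset.univ : Finset (Fin n)).card := Finset.card_le_card (Finset.subset_univ _)
      _ = n := by simp
  omega



lemma dsv_inj {α : Type*} {p q r s t u : α}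
    (h1 : p ≠ q) (h2 : p ≠ r) (h3 : p ≠ s) (h4 : p ≠ t) (h5 : p ≠ u)
    (h6 : q ≠ r) (h7 : q ≠ s) (h8 : q ≠ t) (h9 : q ≠ u)
    (h10 : r ≠ s) (h11 : r ≠ t) (h12 : r ≠ u)
    (h13 : s ≠ t) (h14 : s ≠ u) (h15 : t ≠ u) :
    Function.Injective (Sum.elim (fun i : Fin 2 => if i = 0 then p else q)
      (Sum.elim (fun i : Fin 2 => if i = 0 then r else s)
        (fun i : Fin 2 => if i = 0 then t else u)) : DSV → α) := by
  intro a b hab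
  rcases a with (ai|ai|ai) <;> rcases b with (bi|bi|bi) <;> fin_cases ai <;> fin_cases bi <;>
    simp_all


lemma build_copy {n : ℕ} (G : SimpleGraph (Fin n)) [DecidableRel G.Adj]
    (c : Sym2 (Fin n) → ℕ) (hc : IsProperEdgeColoring G c)
    {x y : Fin n} (hxy : G.Adj x y) (hdx : 7 ≤ G.degree x) (hdy : 4 ≤ G.degree y) :
    ContainsRainbowCopy (doubleStar 2 2) G c := by
  classical
  -- pick w1 w2 : neighbors of y other than x
  have hYcard : 3 ≤ ((G.neighborFinset y).erase x).card := by
    rw [Finset.card_erase_of_mem ((SimpleGraph.mem_neighborFinset _ _ _).mpr hxy.symm)]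
    have : (G.neighborFinset y).card = G.degree y := rfl
    omega
  obtain ⟨w1, hw1, w2, hw2, hww⟩ := Finset.one_lt_card.mp (by omega : 1 < ((G.neighborFinset y).erase x).card)
  rw [Finset.mem_erase, SimpleGraph.mem_neighborFinset] at hw1 hw2
  obtain ⟨hw1x, hyw1⟩ := hw1
  obtain ⟨hw2x, hyw2⟩ := hw2
  -- pick z1 z2 : good neighbors of x
  have hBcard : 6 ≤ ((G.neighborFinset x).erase y).card := by
    rw [Finset.card_erase_of_mem ((SimpleGraph.mem_neighborFinset _ _ _).mpr hxy)]
    have : (G.neighborFinset x).card = G.degree x := rfl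
    omega
  set B := (G.neighborFinset x).erase y with hB
  let P : Fin n → Prop := fun z => z ≠ w1 ∧ z ≠ w2 ∧ c s(x, z) ≠ c s(y, w1) ∧ c s(x, z) ≠ c s(y, w2)
  have hPz : ∀ z, P z ↔ (z ≠ w1 ∧ z ≠ w2 ∧ c s(x, z) ≠ c s(y, w1) ∧ c s(x, z) ≠ c s(y, w2)) :=
    fun z => Iff.rfl
  have hcol : ∀ u : Fin n, (B.filter (fun z => c s(x, z) = c s(y, u))).card ≤ 1 := by
    intro u
    rw [Finset.card_le_one]
    intro z hz z' hz'
    rw [Finset.mem_filter, hB, Finset.mem_erase, SimpleGraph.mem_neighborFinset] at hz hz'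
    by_contra hne
    exact proper_ne hc hz.1.2 hz'.1.2 (fun h => hne h) (hz.2.trans hz'.2.symm)
  have hbad : (B.filter (fun z => ¬ P z)).card ≤ 4 := by
    have hsub : B.filter (fun z => ¬ P z) ⊆
        (({w1} : Finset (Fin n)) ∪ {w2}) ∪
        (B.filter (fun z => c s(x, z) = c s(y, w1)) ∪
         B.filter (fun z => c s(x, z) = c s(y, w2))) := by
      intro z hz
      rw [Finset.mem_filter] at hz
      obtain ⟨hzB, hznp⟩ := hz
      rw [hPz] at hznp
      push_neg at hznp
      simp only [Finset.mem_union, Finset.mem_singleton, Finset.mem_filter]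
      by_cases h1 : z = w1
      · tauto
      by_cases h2 : z = w2
      · tauto
      by_cases h3 : c s(x, z) = c s(y, w1)
      · tauto
      · exact Or.inr (Or.inr ⟨hzB, hznp h1 h2 h3⟩)
    calc (B.filter (fun z => ¬ P z)).card ≤ _ := Finset.card_le_card hsub
      _ ≤ (({w1} : Finset (Fin n)) ∪ {w2}).card +
          (B.filter (fun z => c s(x, z) = c s(y, w1)) ∪
           B.filter (fun z => c s(x, z) = c s(y, w2))).card := Finset.card_union_le _ _
      _ ≤ 4 := by
        have h1 := Finset.card_union_le ({w1} : Finset (Fin n)) ({w2} : Finset (Fin n))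
        have h2 := Finset.card_union_le (B.filter (fun z => c s(x, z) = c s(y, w1)))
          (B.filter (fun z => c s(x, z) = c s(y, w2)))
        have h3 := hcol w1
        have h4 := hcol w2
        simp only [Finset.card_singleton] at h1
        omega
  have hgood : 1 < (B.filter P).card := by
    have := Finset.card_filter_add_card_filter_not (s := B) (p := P)
    omega
  obtain ⟨z1, hz1, z2, hz2, hzz⟩ := Finset.one_lt_card.mp hgood
  rw [Finset.mem_filter, hB, Finset.mem_erase, SimpleGraph.mem_neighborFinset] at hz1 hz2
  obtain ⟨hz1m, hz1P⟩ := hz1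
  obtain ⟨hz2m, hz2P⟩ := hz2
  rw [hPz] at hz1P hz2P
  have hz1 := And.intro hz1m hz1P
  have hz2 := And.intro hz2m hz2P
  obtain ⟨⟨hz1y, hxz1⟩, hz1w1, hz1w2, hc11, hc12⟩ := hz1
  obtain ⟨⟨hz2y, hxz2⟩, hz2w1, hz2w2, hc21, hc22⟩ := hz2
  -- assemble the copy
  set F : DSV → Fin n := Sum.elim (fun i : Fin 2 => if i = 0 then y else x)
      (Sum.elim (fun i : Fin 2 => if i = 0 then w1 else w2)
        (fun i : Fin 2 => if i = 0 then z1 else z2)) with hF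
  have F0 : F (Sum.inl 0) = y := rfl
  have F1 : F (Sum.inl 1) = x := rfl
  have F2 : F (Sum.inr (Sum.inl 0)) = w1 := rfl
  have F3 : F (Sum.inr (Sum.inl 1)) = w2 := rfl
  have F4 : F (Sum.inr (Sum.inr 0)) = z1 := rfl
  have F5 : F (Sum.inr (Sum.inr 1)) = z2 := rfl
  have m1 : Sym2.map F E1 = s(y, x) := by rw [Sym2.map_pair_eq, F0, F1]
  have m1' : Sym2.map F E1 = s(x, y) := m1.trans (Sym2.eq_swap)
  have m2 : Sym2.map F E2 = s(y, w1) := by rw [Sym2.map_pair_eq, F0, F2]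
  have m3 : Sym2.map F E3 = s(y, w2) := by rw [Sym2.map_pair_eq, F0, F3]
  have m4 : Sym2.map F E4 = s(x, z1) := by rw [Sym2.map_pair_eq, F1, F4]
  have m5 : Sym2.map F E5 = s(x, z2) := by rw [Sym2.map_pair_eq, F1, F5]
  have q12 : c s(y, x) ≠ c s(y, w1) := proper_ne hc hxy.symm hyw1 hw1x.symm
  have q13 : c s(y, x) ≠ c s(y, w2) := proper_ne hc hxy.symm hyw2 hw2x.symm
  have q14 : c s(x, y) ≠ c s(x, z1) := proper_ne hc hxy hxz1 hz1y.symm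
  have q15 : c s(x, y) ≠ c s(x, z2) := proper_ne hc hxy hxz2 hz2y.symm
  have q23 : c s(y, w1) ≠ c s(y, w2) := proper_ne hc hyw1 hyw2 hww
  have q24 : c s(y, w1) ≠ c s(x, z1) := hc11.symm
  have q25 : c s(y, w1) ≠ c s(x, z2) := hc21.symm
  have q34 : c s(y, w2) ≠ c s(x, z1) := hc12.symm
  have q35 : c s(y, w2) ≠ c s(x, z2) := hc22.symm
  have q45 : c s(x, z1) ≠ c s(x, z2) := proper_ne hc hxz1 hxz2 hzz
  refine ⟨F, ⟨?_, ?_⟩, ?_⟩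
  · rw [hF]
    exact dsv_inj hxy.ne' hyw1.ne hyw2.ne hz1y.symm hz2y.symm hw1x.symm hw2x.symm
      hxz1.ne hxz2.ne hww hz1w1.symm hz2w1.symm hz1w2.symm hz2w2.symm hzz
  · intro a b hadj
    rcases ds_adj_cases hadj with ⟨rfl,rfl⟩|⟨rfl,rfl⟩|⟨rfl,rfl⟩|⟨rfl,rfl⟩|⟨rfl,rfl⟩|⟨rfl,rfl⟩|⟨rfl,rfl⟩|⟨rfl,rfl⟩|⟨rfl,rfl⟩|⟨rfl,rfl⟩ <;>
      simp only [F0, F1, F2, F3, F4, F5] <;>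
      first
        | exact hxy.symm | exact hxy | exact hyw1 | exact hyw1.symm
        | exact hyw2 | exact hyw2.symm | exact hxz1 | exact hxz1.symm
        | exact hxz2 | exact hxz2.symm
  · intro e1 he1 e2 he2 hne
    rw [ds_edgeSet] at he1 he2
    simp only [Set.mem_insert_iff, Set.mem_singleton_iff] at he1 he2
    rcases he1 with rfl|rfl|rfl|rfl|rfl <;> rcases he2 with rfl|rfl|rfl|rfl|rfl
    · exact absurd rfl hne
    · rw [m1, m2]; exact q12
    · rw [m1, m3]; exact q13
    · rw [m1', m4]; exact q14
    · rw [m1', m5]; exact q15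
    · rw [m2, m1]; exact q12.symm
    · exact absurd rfl hne
    · rw [m2, m3]; exact q23
    · rw [m2, m4]; exact q24
    · rw [m2, m5]; exact q25
    · rw [m3, m1]; exact q13.symm
    · rw [m3, m2]; exact q23.symm
    · exact absurd rfl hne
    · rw [m3, m4]; exact q34
    · rw [m3, m5]; exact q35
    · rw [m4, m1']; exact q14.symm
    · rw [m4, m2]; exact q24.symm
    · rw [m4, m3]; exact q34.symm
    · exact absurd rfl hne
    · rw [m4, m5]; exact q45
    · rw [m5, m1']; exact q15.symm
    · rw [m5, m2]; exact q25.symm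
    · rw [m5, m3]; exact q35.symm
    · rw [m5, m4]; exact q45.symm
    · exact absurd rfl hne


/-- `5n/2 ≤ ex⋆(n, DS_{2,2}) ≤ 6n/2`: for `6 ∣ n` there is an
`n`-vertex graph with exactly `5n/2` edges and a proper edge coloring with no
rainbow `DS_{2,2}`; and every `n`-vertex graph with more than `3n` edges forces a
rainbow `DS_{2,2}` in every proper edge coloring. -/
theorem rainbow_turan_DS22 :
    (∀ n : ℕ, 6 ∣ n → ∃ (G : SimpleGraph (Fin n)) (c : Sym2 (Fin n) → ℕ),
      G.edgeSet.ncard = 5 * n / 2 ∧ IsProperEdgeColoring G c ∧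
      ¬ ContainsRainbowCopy (doubleStar 2 2) G c) ∧
    (∀ (n : ℕ) (G : SimpleGraph (Fin n)), 3 * n < G.edgeSet.ncard →
      ∀ c : Sym2 (Fin n) → ℕ, IsProperEdgeColoring G c →
        ContainsRainbowCopy (doubleStar 2 2) G c) := by
  constructor
  · intro n hn
    exact ⟨blockGraph n, blockColor n, blockGraph_card hn, blockColor_proper n,
      blockGraph_norainbow n⟩
  · intro n G he c hc
    classical
    letI : DecidableRel G.Adj := Classical.decRel _
    obtain ⟨x, y, hxy, hdx, hdy⟩ := key_edge G he
    exact build_copy G c hc hxy hdx hdy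
end

section
/- Let s be a natural number. For every n divisible by 2s+4 there exists a simple graph G on n vertices with exactly (2s+3)n/2 edges together with a proper edge coloring of G containing no rainbow copy of DS_{1,2s+1}; moreover, for every n, every simple graph on n vertices with more than (2s+3)n/2 edges has the property that every proper edge coloring contains a rainbow copy of DS_{1,2s+1}. (In other words, ex⋆(n, DS_{1,2s+1}) = (2s+3)n/2 + o(1).) -/
open SimpleGraph

section RainbowAux
open Finset

/-- Pair coloring on residues: round-robin 1-factorization of `K_{m+1}`. -/
def pcol (m a b : ℕ) : ℕ :=
  if a = m then (2*b) % m else if b = m then (2*a) % m else (a+b) % m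

lemma pcol_comm (m a b : ℕ) : pcol m a b = pcol m b a := by
  unfold pcol
  rcases eq_or_ne a m with ha | ha <;> rcases eq_or_ne b m with hb | hb <;>
    simp [ha, hb, Nat.add_comm]

lemma pcol_lt {m : ℕ} (hm : 0 < m) (a b : ℕ) : pcol m a b < m := by
  unfold pcol; split_ifs <;> exact Nat.mod_lt _ hm

lemma two_mul_mod_inj {m x y : ℕ} (hm : Odd m) (hx : x < m) (hy : y < m)
    (h : 2*x % m = 2*y % m) : x = y := by
  have h2 : Nat.Coprime 2 m := Nat.coprime_two_left.mpr hm
  have := Nat.ModEq.cancel_left_of_coprime (h2.symm)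
    (show 2*x ≡ 2*y [MOD m] from h)
  rwa [Nat.ModEq, Nat.mod_eq_of_lt hx, Nat.mod_eq_of_lt hy] at this

lemma add_mod_inj {m a x y : ℕ} (hx : x < m) (hy : y < m)
    (h : (a+x) % m = (a+y) % m) : x = y := by
  have := Nat.ModEq.add_left_cancel' a (show a + x ≡ a + y [MOD m] from h)
  rwa [Nat.ModEq, Nat.mod_eq_of_lt hx, Nat.mod_eq_of_lt hy] at this

lemma pcol_inj {m a x y : ℕ} (hm : Odd m) (hx : x ≤ m) (hy : y ≤ m)
    (hxa : x ≠ a) (hya : y ≠ a) (ha : a ≤ m) (h : pcol m a x = pcol m a y) : x = y := by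
  have hm0 : 0 < m := hm.pos
  by_cases ham : a = m
  · have hx' : x < m := lt_of_le_of_ne hx (ham ▸ hxa)
    have hy' : y < m := lt_of_le_of_ne hy (ham ▸ hya)
    simp only [pcol, if_pos ham] at h
    exact two_mul_mod_inj hm hx' hy' h
  · have ha' : a < m := lt_of_le_of_ne ha ham
    by_cases hxm : x = m <;> by_cases hym : y = m
    · rw [hxm, hym]
    · simp only [pcol, if_neg ham, if_pos hxm, if_neg hym] at h
      have : a = y := add_mod_inj ha' (lt_of_le_of_ne hy hym)
        (by rw [show a + a = 2*a from by ring]; exact h)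
      exact absurd this.symm hya
    · simp only [pcol, if_neg ham, if_neg hxm, if_pos hym] at h
      have : a = x := add_mod_inj ha' (lt_of_le_of_ne hx hxm)
        (by rw [show a + a = 2*a from by ring]; exact h.symm)
      exact absurd this.symm hxa
    · simp only [pcol, if_neg ham, if_neg hxm, if_neg hym] at h
      exact add_mod_inj (lt_of_le_of_ne hx hxm) (lt_of_le_of_ne hy hym) h

/-- Disjoint union of cliques on blocks of size `D`. -/
def BG (D n : ℕ) : SimpleGraph (Fin n) where
  Adj u v := u ≠ v ∧ (u : ℕ) / D = (v : ℕ) / D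
  symm := by constructor; intro u v h; exact ⟨h.1.symm, h.2.symm⟩
  loopless := by constructor; intro v h; exact h.1 rfl

lemma res_block_inj {D n : ℕ} {a b : Fin n}
    (h1 : (a:ℕ)/D = (b:ℕ)/D) (h2 : (a:ℕ)%D = (b:ℕ)%D) : a = b := by
  apply Fin.ext
  calc (a:ℕ) = D*((a:ℕ)/D) + (a:ℕ)%D := (Nat.div_add_mod _ _).symm
    _ = D*((b:ℕ)/D) + (b:ℕ)%D := by rw [h1, h2]
    _ = b := Nat.div_add_mod _ _

lemma card_block {n D k : ℕ} (hD : 0 < D) (h : (k+1)*D ≤ n) :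
    (Finset.univ.filter (fun v : Fin n => (v:ℕ)/D = k)).card = D := by
  have key : (Finset.univ.filter (fun v : Fin n => (v:ℕ)/D = k)).card
      = (Finset.univ : Finset (Fin D)).card := by
    refine Finset.card_bij' (fun v _ => (⟨(v:ℕ) % D, Nat.mod_lt _ hD⟩ : Fin D))
      (fun x _ => (⟨k*D + (x:ℕ), by
        have : (x:ℕ) < D := x.2
        calc k*D + (x:ℕ) < k*D + D := by omega
          _ = (k+1)*D := by ring
          _ ≤ n := h⟩ : Fin n)) ?_ ?_ ?_ ?_
    · intro a _; exact Finset.mem_univ _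
    · intro x _
      simp only [Finset.mem_filter, Finset.mem_univ, true_and]
      show (k*D + (x:ℕ))/D = k
      rw [mul_comm, Nat.mul_add_div hD, Nat.div_eq_of_lt x.2, add_zero]
    · intro a ha
      simp only [Finset.mem_filter, Finset.mem_univ, true_and] at ha
      apply Fin.ext
      show k*D + (a:ℕ)%D = (a:ℕ)
      calc k*D + (a:ℕ)%D = D*((a:ℕ)/D) + (a:ℕ)%D := by rw [ha, mul_comm]
        _ = a := Nat.div_add_mod _ _
    · intro x _
      apply Fin.ext
      show (k*D + (x:ℕ))%D = (x:ℕ)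
      rw [mul_comm, Nat.mul_add_mod, Nat.mod_eq_of_lt x.2]
  simpa using key

lemma isProper_of_pairwise {V : Type*} {G : SimpleGraph V} {c : Sym2 V → ℕ}
    (h : ∀ v a b, G.Adj v a → G.Adj v b → a ≠ b → c s(v,a) ≠ c s(v,b)) :
    IsProperEdgeColoring G c := by
  rintro e₁ he₁ e₂ he₂ hne ⟨v, hv1, hv2⟩
  induction' e₁ with a₁ b₁
  induction' e₂ with a₂ b₂
  rw [Sym2.mem_iff] at hv1 hv2
  rw [SimpleGraph.mem_edgeSet] at he₁ he₂
  have swap1 : s(a₁, b₁) = s(b₁, a₁) := Sym2.eq_swap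
  have swap2 : s(a₂, b₂) = s(b₂, a₂) := Sym2.eq_swap
  rcases hv1 with rfl | rfl <;> rcases hv2 with rfl | rfl
  · exact h _ _ _ he₁ he₂ (fun hh => hne (by rw [hh]))
  · rw [swap2] at hne ⊢
    exact h _ _ _ he₁ he₂.symm (fun hh => hne (by rw [hh]))
  · rw [swap1] at hne ⊢
    exact h _ _ _ he₁.symm he₂ (fun hh => hne (by rw [hh]))
  · rw [swap1, swap2] at hne ⊢
    exact h _ _ _ he₁.symm he₂.symm (fun hh => hne (by rw [hh]))

lemma pairwise_of_isProper {V : Type*} {G : SimpleGraph V} {c : Sym2 V → ℕ}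
    (h : IsProperEdgeColoring G c) :
    ∀ v a b, G.Adj v a → G.Adj v b → a ≠ b → c s(v,a) ≠ c s(v,b) := by
  intro v a b hva hvb hab
  apply h _ (G.mem_edgeSet.mpr hva) _ (G.mem_edgeSet.mpr hvb)
  · intro hh
    rw [Sym2.mk_eq_mk_iff (p := (v, a)) (q := (v, b))] at hh
    rcases hh with hh | hh
    · exact hab (congrArg Prod.snd hh)
    · have h1 : v = b := congrArg Prod.fst hh
      exact G.loopless.irrefl v (h1 ▸ hvb)
  · exact ⟨v, by simp, by simp⟩

lemma doubleStar_edgeSet (a b : ℕ) :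
    (doubleStar a b).edgeSet =
      {s(Sum.inl 0, Sum.inl 1)} ∪
      {e | ∃ i : Fin a, e = s(Sum.inl 0, Sum.inr (Sum.inl i))} ∪
      {e | ∃ j : Fin b, e = s(Sum.inl 1, Sum.inr (Sum.inr j))} := by
  rw [doubleStar, SimpleGraph.edgeSet_fromEdgeSet]
  rw [sdiff_eq_left, Set.disjoint_left]
  rintro e hmem hdiag
  simp only [Set.mem_union, Set.mem_singleton_iff, Set.mem_setOf_eq] at hmem
  rcases hmem with (rfl | ⟨i, rfl⟩) | ⟨j, rfl⟩ <;>
    simp only [Set.mem_setOf_eq, Sym2.mem_diagSet, Sym2.mk_isDiag_iff] at hdiag <;>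
    simp_all

lemma doubleStar_adj_iff (a b : ℕ) (u v : Fin 2 ⊕ Fin a ⊕ Fin b) :
    (doubleStar a b).Adj u v ↔ s(u,v) = s(Sum.inl 0, Sum.inl 1) ∨
      (∃ i : Fin a, s(u,v) = s(Sum.inl 0, Sum.inr (Sum.inl i))) ∨
      (∃ j : Fin b, s(u,v) = s(Sum.inl 1, Sum.inr (Sum.inr j))) := by
  rw [← SimpleGraph.mem_edgeSet, doubleStar_edgeSet]
  simp only [Set.mem_union, Set.mem_singleton_iff, Set.mem_setOf_eq]
  tauto

/-- The embedding of the double star used in the lower-bound argument. -/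
def dsMap {n : ℕ} (s : ℕ) (X Y Z : Fin n) (Lf : Fin (2*s+1) → Fin n) :
    Fin 2 ⊕ Fin 1 ⊕ Fin (2*s+1) → Fin n
  | Sum.inl i => if i = 0 then Y else X
  | Sum.inr (Sum.inl _) => Z
  | Sum.inr (Sum.inr j) => Lf j

@[simp] lemma dsMap_y {n s : ℕ} (X Y Z : Fin n) (Lf : Fin (2*s+1) → Fin n) :
    dsMap s X Y Z Lf (Sum.inl 0) = Y := rfl
@[simp] lemma dsMap_x {n s : ℕ} (X Y Z : Fin n) (Lf : Fin (2*s+1) → Fin n) :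
    dsMap s X Y Z Lf (Sum.inl 1) = X := rfl
@[simp] lemma dsMap_z {n s : ℕ} (X Y Z : Fin n) (Lf : Fin (2*s+1) → Fin n) (i : Fin 1) :
    dsMap s X Y Z Lf (Sum.inr (Sum.inl i)) = Z := rfl
@[simp] lemma dsMap_l {n s : ℕ} (X Y Z : Fin n) (Lf : Fin (2*s+1) → Fin n) (j : Fin (2*s+1)) :
    dsMap s X Y Z Lf (Sum.inr (Sum.inr j)) = Lf j := rfl

lemma dsMap_inj {n s : ℕ} {X Y Z : Fin n} {Lf : Fin (2*s+1) → Fin n}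
    (hLinj : Function.Injective Lf) (hXY : X ≠ Y) (hYZ : Y ≠ Z) (hZX : Z ≠ X)
    (hLX : ∀ j, Lf j ≠ X) (hLY : ∀ j, Lf j ≠ Y) (hLZ : ∀ j, Lf j ≠ Z) :
    Function.Injective (dsMap s X Y Z Lf) := by
  intro a b hab
  rcases a with ai | az | aj <;> rcases b with bi | bz | bj <;>
    simp only [dsMap] at hab
  · fin_cases ai <;> fin_cases bi <;> simp_all
  · exfalso
    by_cases hai : ai = 0
    · rw [if_pos hai] at hab; exact hYZ hab
    · rw [if_neg hai] at hab; exact hZX hab.symm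
  · exfalso
    by_cases hai : ai = 0
    · rw [if_pos hai] at hab; exact (hLY bj) hab.symm
    · rw [if_neg hai] at hab; exact (hLX bj) hab.symm
  · exfalso
    by_cases hbi : bi = 0
    · rw [if_pos hbi] at hab; exact hYZ hab.symm
    · rw [if_neg hbi] at hab; exact hZX hab
  · have haz : az = bz := Subsingleton.elim _ _
    rw [haz]
  · exact absurd hab.symm (hLZ bj)
  · exfalso
    by_cases hbi : bi = 0
    · rw [if_pos hbi] at hab; exact (hLY aj) hab
    · rw [if_neg hbi] at hab; exact (hLX aj) hab
  · exact absurd hab (hLZ aj)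
  · rw [hLinj hab]

lemma forced_rainbow (s n : ℕ) (G : SimpleGraph (Fin n))
    (hE : (2*s+3)*n < 2*G.edgeSet.ncard) (c : Sym2 (Fin n) → ℕ)
    (hc : IsProperEdgeColoring G c) :
    ContainsRainbowCopy (doubleStar 1 (2*s+1)) G c := by
  classical
  have hsum : ∑ v, G.degree v = 2 * G.edgeFinset.card :=
    G.sum_degrees_eq_twice_card_edges
  have hncard : G.edgeSet.ncard = G.edgeFinset.card := by
    rw [← G.coe_edgeFinset, Set.ncard_coe_finset]
  have hE' : (2*s+3)*n < ∑ v, G.degree v := by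
    rw [hsum]; rw [hncard] at hE; exact hE
  -- Step A : a vertex of degree ≥ 2s+4 with a neighbor of degree ≥ 2
  have key : ∃ X Y, G.Adj X Y ∧ 2*s+4 ≤ G.degree X ∧ 2 ≤ G.degree Y := by
    by_contra hno
    push_neg at hno
    set A : Finset (Fin n) := univ.filter (fun v => 2*s+4 ≤ G.degree v) with hAdef
    set L : Finset (Fin n) :=
      univ.filter (fun v => ∃ a, G.Adj v a ∧ 2*s+4 ≤ G.degree a) with hLdef
    have hLdeg : ∀ v ∈ L, G.degree v = 1 := by
      intro v hv
      rw [hLdef, mem_filter] at hv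
      obtain ⟨-, a, hva, hda⟩ := hv
      have h1 : 0 < G.degree v := (G.degree_pos_iff_exists_adj v).mpr ⟨a, hva⟩
      have h2 : G.degree v < 2 := hno a v hva.symm hda
      omega
    have hdisjAL : Disjoint A L := by
      rw [Finset.disjoint_left]
      intro v hvA hvL
      rw [hAdef, mem_filter] at hvA
      have := hLdeg v hvL
      omega
    have hsubN : ∀ a ∈ A, G.neighborFinset a ⊆ L := by
      intro a ha v hv
      rw [mem_neighborFinset] at hv
      rw [hAdef, mem_filter] at ha
      rw [hLdef, mem_filter]
      exact ⟨mem_univ _, a, hv.symm, ha.2⟩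
    have hALsum : ∑ a ∈ A, G.degree a ≤ L.card := by
      have hdisjN : ∀ a ∈ A, ∀ b ∈ A, a ≠ b →
          Disjoint (G.neighborFinset a) (G.neighborFinset b) := by
        intro a ha b hb hab
        rw [Finset.disjoint_left]
        intro v hva hvb
        rw [mem_neighborFinset] at hva hvb
        have hvL : v ∈ L := hsubN a ha (by rw [mem_neighborFinset]; exact hva)
        have hdv := hLdeg v hvL
        have hsub2 : ({a, b} : Finset (Fin n)) ⊆ G.neighborFinset v := by
          intro w hw
          rw [Finset.mem_insert, Finset.mem_singleton] at hw
          rw [mem_neighborFinset]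
          rcases hw with rfl | rfl
          · exact hva.symm
          · exact hvb.symm
        have h2 := Finset.card_le_card hsub2
        rw [Finset.card_pair hab, G.card_neighborFinset_eq_degree] at h2
        omega
      calc ∑ a ∈ A, G.degree a = ∑ a ∈ A, (G.neighborFinset a).card := by
            simp [G.card_neighborFinset_eq_degree]
        _ = (A.biUnion (fun a => G.neighborFinset a)).card :=
            (Finset.card_biUnion hdisjN).symm
        _ ≤ L.card := Finset.card_le_card (Finset.biUnion_subset.mpr hsubN)
    have hLsum : ∑ v ∈ L, G.degree v = L.card := by
      rw [Finset.sum_congr rfl hLdeg]; simp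
    set R : Finset (Fin n) := univ \ (A ∪ L) with hRdef
    have hRsum : ∑ v ∈ R, G.degree v ≤ (2*s+3) * R.card := by
      have hbd : ∀ v ∈ R, G.degree v ≤ 2*s+3 := by
        intro v hv
        rw [hRdef, Finset.mem_sdiff, Finset.mem_union] at hv
        have hvnA : v ∉ A := fun h => hv.2 (Or.inl h)
        rw [hAdef, mem_filter] at hvnA
        push_neg at hvnA
        have := hvnA (mem_univ v)
        omega
      calc ∑ v ∈ R, G.degree v ≤ R.card * (2*s+3) := by
            simpa using Finset.sum_le_card_nsmul R _ _ hbd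
        _ = (2*s+3) * R.card := mul_comm _ _
    have hsplit : ∑ v, G.degree v
        = ∑ v ∈ R, G.degree v + (∑ v ∈ A, G.degree v + ∑ v ∈ L, G.degree v) := by
      rw [← Finset.sum_union hdisjAL]
      exact (Finset.sum_sdiff (Finset.subset_univ _)).symm
    have hLR : L.card + R.card ≤ n := by
      have hdisjLR : Disjoint L R := by
        rw [hRdef]
        exact (Finset.disjoint_sdiff).mono_left Finset.subset_union_right
      calc L.card + R.card = (L ∪ R).card := (Finset.card_union_of_disjoint hdisjLR).symm
        _ ≤ (univ : Finset (Fin n)).card := Finset.card_le_card (Finset.subset_univ _)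
        _ = n := by simp
    have hfinal : ∑ v, G.degree v ≤ (2*s+3)*n := by
      calc ∑ v, G.degree v
          = ∑ v ∈ R, G.degree v + (∑ v ∈ A, G.degree v + ∑ v ∈ L, G.degree v) := hsplit
        _ ≤ (2*s+3)*R.card + (L.card + L.card) := by
            apply Nat.add_le_add hRsum
            rw [hLsum]; exact Nat.add_le_add_right hALsum _
        _ ≤ (2*s+3)*R.card + (2*s+3)*L.card := by
            apply Nat.add_le_add_left
            have h2 : L.card + L.card = 2 * L.card := by ring
            rw [h2]
            exact Nat.mul_le_mul_right _ (by omega)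
        _ = (2*s+3)*(L.card + R.card) := by ring
        _ ≤ (2*s+3)*n := Nat.mul_le_mul_left _ hLR
    omega
  obtain ⟨X, Y, hXY, hdX, hdY⟩ := key
  have hZ : ∃ Z, G.Adj Y Z ∧ Z ≠ X := by
    by_contra h
    push_neg at h
    have hsub : G.neighborFinset Y ⊆ {X} := by
      intro w hw
      rw [mem_neighborFinset] at hw
      rw [Finset.mem_singleton]
      exact h w hw
    have h2 := Finset.card_le_card hsub
    rw [Finset.card_singleton, G.card_neighborFinset_eq_degree] at h2
    omega
  obtain ⟨Z, hYZ, hZX⟩ := hZ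
  set N := G.neighborFinset X with hNdef
  set Bad := N.filter (fun w => c s(X,w) = c s(Y,Z)) with hBadDef
  have hBad : Bad.card ≤ 1 := by
    rw [Finset.card_le_one]
    intro a ha b hb
    by_contra hab
    rw [hBadDef, mem_filter, hNdef, mem_neighborFinset] at ha hb
    exact pairwise_of_isProper hc X a b ha.1 hb.1 hab (ha.2.trans hb.2.symm)
  set Good := N \ insert Y (insert Z Bad) with hGoodDef
  have hGoodCard : 2*s+1 ≤ Good.card := by
    have h1 : N.card ≤ Good.card + (insert Y (insert Z Bad)).card :=
      Finset.card_le_card_sdiff_add_card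
    have h2 : (insert Y (insert Z Bad)).card ≤ 3 := by
      calc (insert Y (insert Z Bad)).card ≤ (insert Z Bad).card + 1 :=
            Finset.card_insert_le _ _
        _ ≤ 3 := by have := Finset.card_insert_le Z Bad; omega
    have h3 : 2*s+4 ≤ N.card := by
      rw [hNdef, G.card_neighborFinset_eq_degree]; exact hdX
    omega
  set Lf : Fin (2*s+1) → Fin n := fun j => Good.orderEmbOfCardLe hGoodCard j with hLfdef
  have hLmem : ∀ j, Lf j ∈ Good := fun j => Good.orderEmbOfCardLe_mem hGoodCard j
  have hLinj : Function.Injective Lf := fun a b hab => by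
    exact (Good.orderEmbOfCardLe hGoodCard).injective hab
  have hLN : ∀ j, G.Adj X (Lf j) := by
    intro j
    have h := hLmem j
    rw [hGoodDef, Finset.mem_sdiff, hNdef, mem_neighborFinset] at h
    exact h.1
  have hLnotY : ∀ j, Lf j ≠ Y := by
    intro j h
    have hm := hLmem j; rw [hGoodDef, Finset.mem_sdiff] at hm
    exact hm.2 (by rw [h]; exact Finset.mem_insert_self _ _)
  have hLnotZ : ∀ j, Lf j ≠ Z := by
    intro j h
    have hm := hLmem j; rw [hGoodDef, Finset.mem_sdiff] at hm
    exact hm.2 (by rw [h]; exact Finset.mem_insert_of_mem (Finset.mem_insert_self _ _))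
  have hLcol : ∀ j, c s(X, Lf j) ≠ c s(Y,Z) := by
    intro j h
    have hm := hLmem j; rw [hGoodDef, Finset.mem_sdiff] at hm
    apply hm.2
    apply Finset.mem_insert_of_mem
    apply Finset.mem_insert_of_mem
    rw [hBadDef, mem_filter]
    exact ⟨by rw [hNdef, mem_neighborFinset]; exact hLN j, h⟩
  refine ⟨dsMap s X Y Z Lf, ⟨?_, ?_⟩, ?_⟩
  · exact dsMap_inj hLinj hXY.ne hYZ.ne hZX
      (fun j => (hLN j).ne') hLnotY hLnotZ
  · intro u v huv
    rw [doubleStar_adj_iff] at huv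
    rcases huv with h | ⟨i, h⟩ | ⟨j, h⟩ <;> rw [Sym2.eq_iff] at h <;>
      rcases h with h | h <;> obtain ⟨rfl, rfl⟩ := h <;>
      simp only [dsMap_y, dsMap_x, dsMap_z, dsMap_l, Prod.fst, Prod.snd, Prod.swap]
    · exact hXY.symm
    · exact hXY
    · exact hYZ
    · exact hYZ.symm
    · exact hLN j
    · exact (hLN j).symm
  · intro e₁ he₁ e₂ he₂ hne
    rw [doubleStar_edgeSet] at he₁ he₂
    simp only [Set.mem_union, Set.mem_singleton_iff, Set.mem_setOf_eq] at he₁ he₂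
    have hswapYX : s(Y, X) = s(X, Y) := Sym2.eq_swap
    rcases he₁ with (rfl | ⟨i, rfl⟩) | ⟨j, rfl⟩ <;>
      rcases he₂ with (rfl | ⟨i', rfl⟩) | ⟨j', rfl⟩ <;>
      simp only [Sym2.map_pair_eq, dsMap_y, dsMap_x, dsMap_z, dsMap_l]
    · exact absurd rfl hne
    · -- s(Y,X) vs s(Y,Z)
      exact pairwise_of_isProper hc Y X Z hXY.symm hYZ hZX.symm
    · -- s(Y,X) vs s(X, Lf j')
      rw [hswapYX]
      exact pairwise_of_isProper hc X Y (Lf j') hXY (hLN j') (hLnotY j').symm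
    · exact (pairwise_of_isProper hc Y X Z hXY.symm hYZ hZX.symm).symm
    · -- both middle edges : i = i'
      exact absurd (by rw [Subsingleton.elim i i']) hne
    · -- s(Y,Z) vs s(X, Lf j')
      exact fun h => hLcol j' h.symm
    · rw [hswapYX]
      exact (pairwise_of_isProper hc X Y (Lf j) hXY (hLN j) (hLnotY j).symm).symm
    · exact hLcol j
    · -- s(X, Lf j) vs s(X, Lf j')
      have hjj : j ≠ j' := by
        intro h; exact hne (by rw [h])
      exact pairwise_of_isProper hc X (Lf j) (Lf j') (hLN j) (hLN j')
        (fun h => hjj (hLinj h))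


lemma BG_adj (D n : ℕ) (u v : Fin n) :
    (BG D n).Adj u v ↔ u ≠ v ∧ (u:ℕ)/D = (v:ℕ)/D := Iff.rfl

/-- Block coloring. -/
def bcol (m D n : ℕ) : Sym2 (Fin n) → ℕ :=
  Sym2.lift ⟨fun u v => pcol m ((u:ℕ)%D) ((v:ℕ)%D), fun u v => pcol_comm m _ _⟩

@[simp] lemma bcol_mk (m D n : ℕ) (u v : Fin n) :
    bcol m D n s(u,v) = pcol m ((u:ℕ)%D) ((v:ℕ)%D) := rfl

lemma construction (s t : ℕ) :
    ∃ (G : SimpleGraph (Fin ((2*s+4)*t))) (c : Sym2 (Fin ((2*s+4)*t)) → ℕ),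
      G.edgeSet.ncard = (2*s+3) * ((2*s+4)*t) / 2 ∧ IsProperEdgeColoring G c ∧
      ¬ ContainsRainbowCopy (doubleStar 1 (2*s+1)) G c := by
  classical
  set D := 2*s+4 with hDdef
  set n := (2*s+4)*t with hndef
  have hD : 0 < D := by omega
  have hOdd : Odd (2*s+3) := ⟨s+1, by ring⟩
  have hdivlt : ∀ v : Fin n, (v:ℕ)/D < t := by
    intro v
    rw [Nat.div_lt_iff_lt_mul hD]
    have := v.2
    calc (v:ℕ) < n := v.2
      _ = t * D := by rw [hndef, hDdef, mul_comm]
  have hblock : ∀ k, k < t →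
      (Finset.univ.filter (fun v : Fin n => (v:ℕ)/D = k)).card = D := by
    intro k hk
    apply card_block hD
    calc (k+1)*D ≤ t*D := Nat.mul_le_mul_right _ (by omega)
      _ = n := by rw [hndef, hDdef, mul_comm]
  -- properness
  have hproper : IsProperEdgeColoring (BG D n) (bcol (2*s+3) D n) := by
    apply isProper_of_pairwise
    intro v a b hva hvb hab
    rw [bcol_mk, bcol_mk]
    intro h
    have hma : (a:ℕ)%D ≤ 2*s+3 := by
      have := Nat.mod_lt (a:ℕ) hD; omega
    have hmb : (b:ℕ)%D ≤ 2*s+3 := by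
      have := Nat.mod_lt (b:ℕ) hD; omega
    have hmv : (v:ℕ)%D ≤ 2*s+3 := by
      have := Nat.mod_lt (v:ℕ) hD; omega
    have hav : (a:ℕ)%D ≠ (v:ℕ)%D := by
      intro hr
      exact hva.1 (res_block_inj hva.2 hr.symm)
    have hbv : (b:ℕ)%D ≠ (v:ℕ)%D := by
      intro hr
      exact hvb.1 (res_block_inj hvb.2 hr.symm)
    have hres : (a:ℕ)%D = (b:ℕ)%D := pcol_inj hOdd hma hmb hav hbv hmv h
    exact hab (res_block_inj (hva.2.symm.trans hvb.2) hres)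
  refine ⟨BG D n, bcol (2*s+3) D n, ?_, hproper, ?_⟩
  · -- edge count
    have hdeg : ∀ v : Fin n, (BG D n).degree v = 2*s+3 := by
      intro v
      have hnb : (BG D n).neighborFinset v =
          (Finset.univ.filter (fun u : Fin n => (u:ℕ)/D = (v:ℕ)/D)) \ {v} := by
        ext u
        rw [mem_neighborFinset, BG_adj, Finset.mem_sdiff, Finset.mem_filter,
          Finset.mem_singleton]
        constructor
        · rintro ⟨h1, h2⟩
          exact ⟨⟨Finset.mem_univ _, h2.symm⟩, fun h => h1 h.symm⟩
        · rintro ⟨⟨-, h2⟩, h1⟩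
          exact ⟨fun h => h1 h.symm, h2.symm⟩
      rw [← card_neighborFinset_eq_degree, hnb,
        Finset.card_sdiff_of_subset (by
          rw [Finset.singleton_subset_iff, Finset.mem_filter]
          exact ⟨Finset.mem_univ _, rfl⟩),
        hblock _ (hdivlt v), Finset.card_singleton]
      omega
    have hsum : ∑ v : Fin n, (BG D n).degree v = 2 * (BG D n).edgeFinset.card :=
      (BG D n).sum_degrees_eq_twice_card_edges
    have hsum2 : ∑ v : Fin n, (BG D n).degree v = (2*s+3) * ((2*s+4)*t) := by
      rw [Finset.sum_congr rfl (fun v _ => hdeg v), Finset.sum_const, smul_eq_mul,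
        Finset.card_univ, Fintype.card_fin, hndef]
      ring
    have hncard : (BG D n).edgeSet.ncard = (BG D n).edgeFinset.card := by
      rw [← (BG D n).coe_edgeFinset, Set.ncard_coe_finset]
    rw [hncard, ← hsum2, hsum, Nat.mul_div_cancel_left _ (by norm_num : 0 < 2)]
  · -- no rainbow copy
    rintro ⟨f, ⟨finj, fadj⟩, hrb⟩
    have hyx : (doubleStar 1 (2*s+1)).Adj (Sum.inl 0) (Sum.inl 1) := by
      rw [doubleStar_adj_iff]; left; rfl
    have hyz : (doubleStar 1 (2*s+1)).Adj (Sum.inl 0) (Sum.inr (Sum.inl 0)) := by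
      rw [doubleStar_adj_iff]; right; left; exact ⟨0, rfl⟩
    have hxl : ∀ j : Fin (2*s+1),
        (doubleStar 1 (2*s+1)).Adj (Sum.inl 1) (Sum.inr (Sum.inr j)) := by
      intro j
      rw [doubleStar_adj_iff]; right; right; exact ⟨j, rfl⟩
    set Y := f (Sum.inl 0) with hYdef
    set X := f (Sum.inl 1) with hXdef
    set Z := f (Sum.inr (Sum.inl 0)) with hZdef
    set Lv : Fin (2*s+1) → Fin n := fun j => f (Sum.inr (Sum.inr j)) with hLvdef
    have hYX : (BG D n).Adj Y X := fadj _ _ hyx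
    have hYZ : (BG D n).Adj Y Z := fadj _ _ hyz
    have hXL : ∀ j, (BG D n).Adj X (Lv j) := fun j => fadj _ _ (hxl j)
    set k := (X:ℕ)/D with hkdef
    set S := (Finset.univ.filter (fun u : Fin n => (u:ℕ)/D = k)) \ {X} with hSdef
    have hScard : S.card = 2*s+3 := by
      rw [hSdef, Finset.card_sdiff_of_subset (by
        rw [Finset.singleton_subset_iff, Finset.mem_filter]
        exact ⟨Finset.mem_univ _, rfl⟩), hblock _ (hdivlt X), Finset.card_singleton]
      omega
    have hZX : Z ≠ X := finj.ne (by simp)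
    have hZdiv : (Z:ℕ)/D = k := by
      rw [hkdef, ← hYX.2, hYZ.2]
    set T := insert Y (Finset.univ.image Lv) with hTdef
    have hYnotim : Y ∉ Finset.univ.image Lv := by
      rw [Finset.mem_image]
      rintro ⟨j, -, hj⟩
      exact absurd (finj hj) (by simp)
    have hLvinj : Function.Injective Lv := by
      intro a b hab
      have := finj hab
      simpa using this
    have hTcard : T.card = 2*s+2 := by
      rw [hTdef, Finset.card_insert_of_notMem hYnotim,
        Finset.card_image_of_injective _ hLvinj]
      simp
    have hZnotT : Z ∉ T := by
      rw [hTdef, Finset.mem_insert, Finset.mem_image]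
      rintro (h | ⟨j, -, hj⟩)
      · exact absurd (finj h) (by simp)
      · exact absurd (finj hj) (by simp)
    have hsubset : insert Z T ⊆ S := by
      intro w hw
      rw [hSdef, Finset.mem_sdiff, Finset.mem_filter, Finset.mem_singleton]
      rw [Finset.mem_insert, hTdef, Finset.mem_insert, Finset.mem_image] at hw
      rcases hw with rfl | rfl | ⟨j, -, rfl⟩
      · exact ⟨⟨Finset.mem_univ _, hZdiv⟩, hZX⟩
      · exact ⟨⟨Finset.mem_univ _, by rw [hkdef, hYX.2]⟩, hYX.1⟩
      · exact ⟨⟨Finset.mem_univ _, by rw [hkdef, (hXL j).2]⟩, fun h => (hXL j).1 h.symm⟩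
    have hSeq : insert Z T = S := by
      apply Finset.eq_of_subset_of_card_le hsubset
      rw [hScard, Finset.card_insert_of_notMem hZnotT, hTcard]
    -- colors at X cover everything
    have hXS : ∀ w ∈ S, (BG D n).Adj X w := by
      intro w hw
      rw [hSdef, Finset.mem_sdiff, Finset.mem_filter, Finset.mem_singleton] at hw
      exact ⟨fun h => hw.2 h.symm, hw.1.2.symm⟩
    have himg : S.image (fun w => bcol (2*s+3) D n s(X,w)) = Finset.range (2*s+3) := by
      apply Finset.eq_of_subset_of_card_le
      · intro x hx
        rw [Finset.mem_image] at hx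
        obtain ⟨w, -, rfl⟩ := hx
        rw [Finset.mem_range, bcol_mk]
        exact pcol_lt (by omega) _ _
      · rw [Finset.card_range, Finset.card_image_of_injOn, hScard]
        intro w hw w' hw' hcc
        by_contra hww
        exact pairwise_of_isProper hproper X w w' (hXS w hw) (hXS w' hw') hww hcc
    have hmem : bcol (2*s+3) D n s(Y,Z) ∈ Finset.range (2*s+3) := by
      rw [Finset.mem_range, bcol_mk]
      exact pcol_lt (by omega) _ _
    rw [← himg, Finset.mem_image] at hmem
    obtain ⟨w, hwS, hwc⟩ := hmem
    rw [← hSeq, Finset.mem_insert] at hwS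
    rcases hwS with rfl | hwT
    · -- w = Z : contradiction with properness at Z
      have hadjXZ : (BG D n).Adj X Z := ⟨hZX.symm, by rw [hZdiv]⟩
      apply pairwise_of_isProper hproper Z X Y hadjXZ.symm hYZ.symm hYX.1.symm
      calc bcol (2*s+3) D n s(Z,X) = bcol (2*s+3) D n s(X,Z) := by rw [Sym2.eq_swap]
        _ = bcol (2*s+3) D n s(Y,Z) := hwc
        _ = bcol (2*s+3) D n s(Z,Y) := by rw [Sym2.eq_swap]
    · rw [hTdef, Finset.mem_insert] at hwT
      rcases hwT with rfl | hwI
      · -- w = Y : rainbow contradiction using edges yx and yz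
        apply hrb s(Sum.inl 0, Sum.inl 1) ((doubleStar 1 (2*s+1)).mem_edgeSet.mpr hyx)
          s(Sum.inl 0, Sum.inr (Sum.inl 0)) ((doubleStar 1 (2*s+1)).mem_edgeSet.mpr hyz)
          (by simp [Sym2.mk_eq_mk_iff, Prod.ext_iff])
        rw [Sym2.map_pair_eq, Sym2.map_pair_eq]
        show bcol (2*s+3) D n s(Y,X) = bcol (2*s+3) D n s(Y,Z)
        calc bcol (2*s+3) D n s(Y,X) = bcol (2*s+3) D n s(X,Y) := by rw [Sym2.eq_swap]
          _ = bcol (2*s+3) D n s(Y,Z) := hwc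
      · -- w = Lv j : rainbow contradiction using edges x-leaf and yz
        rw [Finset.mem_image] at hwI
        obtain ⟨j, -, rfl⟩ := hwI
        apply hrb s(Sum.inl 1, Sum.inr (Sum.inr j))
          ((doubleStar 1 (2*s+1)).mem_edgeSet.mpr (hxl j))
          s(Sum.inl 0, Sum.inr (Sum.inl 0)) ((doubleStar 1 (2*s+1)).mem_edgeSet.mpr hyz)
          (by simp [Sym2.mk_eq_mk_iff, Prod.ext_iff])
        rw [Sym2.map_pair_eq, Sym2.map_pair_eq]
        exact hwc

end RainbowAux

/-- `ex⋆(n, DS_{1,2s+1}) = (2s+3)n/2 + o(1)`: for `(2s+4) ∣ n` there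
is an `n`-vertex graph with exactly `(2s+3)n/2` edges and a proper edge coloring
with no rainbow `DS_{1,2s+1}`; and every `n`-vertex graph with more than
`(2s+3)n/2` edges forces a rainbow `DS_{1,2s+1}` in every proper edge coloring. -/
theorem rainbow_turan_DS1odd (s : ℕ) :
    (∀ n : ℕ, (2 * s + 4) ∣ n → ∃ (G : SimpleGraph (Fin n)) (c : Sym2 (Fin n) → ℕ),
      G.edgeSet.ncard = (2 * s + 3) * n / 2 ∧ IsProperEdgeColoring G c ∧
      ¬ ContainsRainbowCopy (doubleStar 1 (2 * s + 1)) G c) ∧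
    (∀ (n : ℕ) (G : SimpleGraph (Fin n)), (2 * s + 3) * n < 2 * G.edgeSet.ncard →
      ∀ c : Sym2 (Fin n) → ℕ, IsProperEdgeColoring G c →
        ContainsRainbowCopy (doubleStar 1 (2 * s + 1)) G c) := by
  constructor
  · intro n hdvd
    obtain ⟨t, rfl⟩ := hdvd
    exact construction s t
  · intro n G hE c hc
    exact forced_rainbow s n G hE c hc
end

section
/- Let c_1, c_2, c_3 be natural numbers. Every proper edge coloring of the caterpillar C_{c_1+1, c_1+c_2, c_1+c_2+c_3+1} contains a rainbow copy of the caterpillar C_{c_1, c_2, c_3}. -/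
open SimpleGraph

lemma exists_avoid {n k : ℕ} (h : Fin n → ℕ) (hi : Function.Injective h)
    (S : Finset ℕ) (hcard : k + S.card ≤ n) :
    ∃ g : Fin k → Fin n, Function.Injective g ∧ ∀ i, h (g i) ∉ S := by
  classical
  set T : Finset (Fin n) := Finset.univ.filter (fun i => h i ∉ S) with hT
  have h1 : (Finset.univ.filter (fun i : Fin n => h i ∈ S)).card ≤ S.card := by
    apply Finset.card_le_card_of_injOn h
    · intro x hx; simpa using (Finset.mem_filter.mp hx).2
    · exact hi.injOn
  have h2 : (Finset.univ.filter (fun i : Fin n => h i ∈ S)).card + T.card = n := by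
    rw [hT, Finset.card_filter_add_card_filter_not]
    simp
  have hTcard : k ≤ T.card := by omega
  refine ⟨fun i => T.orderEmbOfCardLe hTcard i,
    fun a b hab => (T.orderEmbOfCardLe hTcard).injective hab, fun i => ?_⟩
  have := Finset.orderEmbOfCardLe_mem T hTcard i
  simpa [hT] using this

lemma caterpillar3_edge_cases {a b c : ℕ} (e : Sym2 (Fin 3 ⊕ Fin a ⊕ Fin b ⊕ Fin c))
    (he : e ∈ (caterpillar3 a b c).edgeSet) :
    e = s(Sum.inl 0, Sum.inl 1) ∨ e = s(Sum.inl 1, Sum.inl 2) ∨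
    (∃ i : Fin a, e = s(Sum.inl 0, Sum.inr (Sum.inl i))) ∨
    (∃ i : Fin b, e = s(Sum.inl 1, Sum.inr (Sum.inr (Sum.inl i)))) ∨
    (∃ i : Fin c, e = s(Sum.inl 2, Sum.inr (Sum.inr (Sum.inr i)))) := by
  simp only [caterpillar3, edgeSet_fromEdgeSet, Set.mem_diff, Set.mem_union, Set.mem_insert_iff,
    Set.mem_singleton_iff, Set.mem_setOf_eq] at he
  tauto

set_option maxHeartbeats 1000000 in
/-- Every proper edge coloring of the caterpillar
`C_{c₁+1, c₁+c₂, c₁+c₂+c₃+1}` contains a rainbow copy of the caterpillar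
`C_{c₁, c₂, c₃}`. -/
theorem caterpillar_aug_rainbow (c₁ c₂ c₃ : ℕ)
    (c : Sym2 (Fin 3 ⊕ Fin (c₁ + 1) ⊕ Fin (c₁ + c₂) ⊕ Fin (c₁ + c₂ + c₃ + 1)) → ℕ)
    (hc : IsProperEdgeColoring (caterpillar3 (c₁ + 1) (c₁ + c₂) (c₁ + c₂ + c₃ + 1)) c) :
    ContainsRainbowCopy (caterpillar3 c₁ c₂ c₃)
      (caterpillar3 (c₁ + 1) (c₁ + c₂) (c₁ + c₂ + c₃ + 1)) c := by
  classical
  set G := caterpillar3 (c₁ + 1) (c₁ + c₂) (c₁ + c₂ + c₃ + 1) with hG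
  set X0 : Fin 3 ⊕ Fin (c₁ + 1) ⊕ Fin (c₁ + c₂) ⊕ Fin (c₁ + c₂ + c₃ + 1) := Sum.inl 0 with hX0
  set X1 : Fin 3 ⊕ Fin (c₁ + 1) ⊕ Fin (c₁ + c₂) ⊕ Fin (c₁ + c₂ + c₃ + 1) := Sum.inl 1 with hX1
  set X2 : Fin 3 ⊕ Fin (c₁ + 1) ⊕ Fin (c₁ + c₂) ⊕ Fin (c₁ + c₂ + c₃ + 1) := Sum.inl 2 with hX2
  have adj01 : G.Adj X0 X1 := by simp [hG, caterpillar3, hX0, hX1, Sym2.eq_iff]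
  have adj12 : G.Adj X1 X2 := by simp [hG, caterpillar3, hX1, hX2, Sym2.eq_iff]
  have adjA : ∀ i : Fin (c₁ + 1), G.Adj X0 (Sum.inr (Sum.inl i)) := by
    intro i; simp [hG, caterpillar3, hX0, Sym2.eq_iff]
  have adjB : ∀ i : Fin (c₁ + c₂), G.Adj X1 (Sum.inr (Sum.inr (Sum.inl i))) := by
    intro i; simp [hG, caterpillar3, hX1, Sym2.eq_iff]
  have adjC : ∀ i : Fin (c₁ + c₂ + c₃ + 1), G.Adj X2 (Sum.inr (Sum.inr (Sum.inr i))) := by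
    intro i; simp [hG, caterpillar3, hX2, Sym2.eq_iff]
  have key : ∀ u v w, G.Adj u v → G.Adj u w → v ≠ w → c s(u, v) ≠ c s(u, w) := by
    intro u v w huv huw hvw
    apply hc _ (G.mem_edgeSet.mpr huv) _ (G.mem_edgeSet.mpr huw)
    · intro h
      rw [Sym2.eq_iff] at h
      rcases h with ⟨-, h⟩ | ⟨h1, h2⟩
      · exact hvw h
      · exact G.ne_of_adj huv h2.symm
    · exact ⟨u, by simp, by simp⟩
  set A : Fin (c₁ + 1) → ℕ := fun i => c s(X0, Sum.inr (Sum.inl i)) with hA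
  set B : Fin (c₁ + c₂) → ℕ := fun i => c s(X1, Sum.inr (Sum.inr (Sum.inl i))) with hB
  set C : Fin (c₁ + c₂ + c₃ + 1) → ℕ := fun i => c s(X2, Sum.inr (Sum.inr (Sum.inr i))) with hC
  set p₁ : ℕ := c s(X0, X1) with hp₁
  set p₂ : ℕ := c s(X1, X2) with hp₂
  have Ainj : Function.Injective A := by
    intro i j hij
    by_contra hne
    exact key X0 _ _ (adjA i) (adjA j) (by simpa using hne) hij
  have Binj : Function.Injective B := by
    intro i j hij
    by_contra hne
    exact key X1 _ _ (adjB i) (adjB j) (by simpa using hne) hij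
  have Cinj : Function.Injective C := by
    intro i j hij
    by_contra hne
    exact key X2 _ _ (adjC i) (adjC j) (by simpa using hne) hij
  have hp12 : p₁ ≠ p₂ := by
    have := key X1 X0 X2 adj01.symm adj12
      (by simp only [hX0, hX2, ne_eq, Sum.inl.injEq]; decide)
    rw [hp₁, hp₂, Sym2.eq_swap (a := X0) (b := X1)]
    exact this
  have hA1 : ∀ i, A i ≠ p₁ := fun i =>
    key X0 _ X1 (adjA i) adj01 (by simp)
  have hB1 : ∀ i, B i ≠ p₁ := by
    intro i
    have := key X1 _ X0 (adjB i) adj01.symm (by simp)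
    rw [hp₁, Sym2.eq_swap (a := X0) (b := X1)]
    exact this
  have hB2 : ∀ i, B i ≠ p₂ := fun i =>
    key X1 _ X2 (adjB i) adj12 (by simp)
  have hC2 : ∀ i, C i ≠ p₂ := by
    intro i
    have := key X2 _ X1 (adjC i) adj12.symm (by simp)
    rw [hp₂, Sym2.eq_swap (a := X1) (b := X2)]
    exact this
  obtain ⟨g₁, hg₁inj, hg₁⟩ := exists_avoid (k := c₁) A Ainj {p₂} (by simp)
  have hg₁' : ∀ i, A (g₁ i) ≠ p₂ := by intro i; simpa using hg₁ i
  set S₂ : Finset ℕ := Finset.image (fun i => A (g₁ i)) Finset.univ with hS₂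
  have hS₂card : S₂.card ≤ c₁ := by
    rw [hS₂]
    refine le_trans Finset.card_image_le (by simp)
  obtain ⟨g₂, hg₂inj, hg₂⟩ := exists_avoid (k := c₂) B Binj S₂ (by omega)
  have hg₂' : ∀ i j, B (g₂ i) ≠ A (g₁ j) := by
    intro i j h
    exact hg₂ i (by rw [hS₂]; exact Finset.mem_image.mpr ⟨j, Finset.mem_univ j, h.symm⟩)
  set S₃ : Finset ℕ := insert p₁ (S₂ ∪ Finset.image (fun i => B (g₂ i)) Finset.univ) with hS₃
  have hS₃card : S₃.card ≤ c₁ + c₂ + 1 := by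
    rw [hS₃]
    have h1 := Finset.card_insert_le p₁ (S₂ ∪ Finset.image (fun i => B (g₂ i)) Finset.univ)
    have h2 := Finset.card_union_le S₂ (Finset.image (fun i => B (g₂ i)) Finset.univ)
    have h3 : (Finset.image (fun i => B (g₂ i)) Finset.univ).card ≤ c₂ :=
      le_trans Finset.card_image_le (by simp)
    omega
  obtain ⟨g₃, hg₃inj, hg₃⟩ := exists_avoid (k := c₃) C Cinj S₃ (by omega)
  have hg₃1 : ∀ i, C (g₃ i) ≠ p₁ := by
    intro i h
    exact hg₃ i (by rw [hS₃, h]; exact Finset.mem_insert_self _ _)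
  have hg₃A : ∀ i j, C (g₃ i) ≠ A (g₁ j) := by
    intro i j h
    apply hg₃ i
    rw [hS₃]
    exact Finset.mem_insert_of_mem (Finset.mem_union_left _
      (by rw [hS₂]; exact Finset.mem_image.mpr ⟨j, Finset.mem_univ j, h.symm⟩))
  have hg₃B : ∀ i j, C (g₃ i) ≠ B (g₂ j) := by
    intro i j h
    apply hg₃ i
    rw [hS₃]
    exact Finset.mem_insert_of_mem (Finset.mem_union_right _
      (Finset.mem_image.mpr ⟨j, Finset.mem_univ j, h.symm⟩))
  refine ⟨Sum.elim (fun i => Sum.inl i)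
      (Sum.elim (fun i => Sum.inr (Sum.inl (g₁ i)))
        (Sum.elim (fun i => Sum.inr (Sum.inr (Sum.inl (g₂ i))))
          (fun i => Sum.inr (Sum.inr (Sum.inr (g₃ i)))))), ⟨?_, ?_⟩, ?_⟩
  · rintro (i | i | i | i) (j | j | j | j) h <;>
      simp only [Sum.elim_inl, Sum.elim_inr, Sum.inl.injEq, Sum.inr.injEq,
        reduceCtorEq] at h <;>
      first
        | rw [h]
        | rw [hg₁inj h]
        | rw [hg₂inj h]
        | rw [hg₃inj h]
  · rintro a b hab
    simp only [caterpillar3, fromEdgeSet_adj, Set.mem_union, Set.mem_insert_iff,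
      Set.mem_singleton_iff, Set.mem_setOf_eq, Sym2.eq_iff] at hab
    obtain ⟨hmem, -⟩ := hab
    rcases hmem with (((h | h) | ⟨i, h⟩) | ⟨i, h⟩) | ⟨i, h⟩ <;>
      rcases h with ⟨ha, hb⟩ | ⟨ha, hb⟩ <;> subst ha <;> subst hb <;>
      simp only [Sum.elim_inl, Sum.elim_inr] <;>
      first
        | exact adj01 | exact adj01.symm | exact adj12 | exact adj12.symm
        | exact adjA _ | exact (adjA _).symm | exact adjB _ | exact (adjB _).symm
        | exact adjC _ | exact (adjC _).symm
  · intro e₁ he₁ e₂ he₂ hne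
    rcases caterpillar3_edge_cases e₁ he₁ with h1 | h1 | ⟨i, h1⟩ | ⟨i, h1⟩ | ⟨i, h1⟩ <;>
      rcases caterpillar3_edge_cases e₂ he₂ with h2 | h2 | ⟨j, h2⟩ | ⟨j, h2⟩ | ⟨j, h2⟩ <;>
      subst h1 <;> subst h2 <;>
      simp only [Sym2.map_pair_eq, Sum.elim_inl, Sum.elim_inr] <;>
      simp only [ne_eq, Sym2.eq_iff, Sum.inl.injEq, Sum.inr.injEq, reduceCtorEq, not_or,
        not_and, and_false, false_and, or_false, false_or, or_self, not_false_eq_true,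
        and_true, true_and, not_true_eq_false, and_self] at hne <;>
      first
        | exact absurd rfl hne
        | exact hne (by decide) (by decide)
        | exact hp12 | exact hp12.symm
        | exact (hA1 (g₁ _)).symm | exact hA1 (g₁ _)
        | exact (hB1 (g₂ _)).symm | exact hB1 (g₂ _)
        | exact (hg₃1 _).symm | exact hg₃1 _
        | exact (hg₁' _).symm | exact hg₁' _
        | exact (hB2 (g₂ _)).symm | exact hB2 (g₂ _)
        | exact (hC2 (g₃ _)).symm | exact hC2 (g₃ _)
        | exact (hg₂' _ _).symm | exact hg₂' _ _
        | exact (hg₃A _ _).symm | exact hg₃A _ _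
        | exact (hg₃B _ _).symm | exact hg₃B _ _
        | exact fun h => hne (hg₁inj (Ainj h))
        | exact fun h => hne (hg₂inj (Binj h))
        | exact fun h => hne (hg₃inj (Cinj h))
end

section
/- Let k ≥ 2 be a natural number. Let T'(k,2) be the rooted tree of depth 2 consisting of a root with k children, each of which has exactly k^2 + k − 1 pendant leaves. Then every proper edge coloring of T'(k,2) contains a rainbow copy of the perfect k-ary tree T(k,2) of depth 2 (the rooted tree whose root has k children, each of which has exactly k leaf children). -/
open SimpleGraph

lemma exists_avoid_s19 {m k : ℕ} (lc : Fin m → ℕ) (hinj : Function.Injective lc)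
    (Forb : Finset ℕ) (r : ℕ) (hr : ∀ j, lc j ≠ r)
    (hcard : (Forb.erase r).card + k ≤ m) :
    ∃ T : Finset (Fin m), T.card = k ∧ ∀ j ∈ T, lc j ∉ Forb := by
  classical
  set B := Finset.univ.filter (fun j => lc j ∈ Forb) with hB
  have hBcard : B.card ≤ (Forb.erase r).card := by
    apply Finset.card_le_card_of_injOn lc
    · intro j hj
      simp only [hB, Finset.mem_filter] at hj
      exact Finset.mem_erase.2 ⟨hr j, by simpa using hj⟩
    · exact hinj.injOn
  have hcompl : Bᶜ.card = Fintype.card (Fin m) - B.card := Finset.card_compl B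
  have hmm : Fintype.card (Fin m) = m := Fintype.card_fin m
  have h1 : k ≤ Bᶜ.card := by omega
  obtain ⟨T, hTsub, hTcard⟩ := Finset.exists_subset_card_eq h1
  refine ⟨T, hTcard, fun j hj => ?_⟩
  have h2 := hTsub hj
  simp [hB] at h2
  exact h2

lemma greedy (k : ℕ) (hk : 2 ≤ k) (rc : Fin k → ℕ)
    (lc : Fin k → Fin (k ^ 2 + k - 1) → ℕ)
    (hlcinj : ∀ i, Function.Injective (lc i))
    (hlr : ∀ i j, lc i j ≠ rc i) :
    ∀ n, n ≤ k →
    ∃ T : Fin k → Finset (Fin (k ^ 2 + k - 1)),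
      ∀ i : Fin k, i.val < n →
        (T i).card = k ∧ (∀ j ∈ T i, ∀ i', lc i j ≠ rc i') ∧
        ∀ i' : Fin k, i'.val < i.val → ∀ j ∈ T i, ∀ j' ∈ T i', lc i j ≠ lc i' j' := by
  classical
  intro n
  induction n with
  | zero => exact fun _ => ⟨fun _ => ∅, fun i h => absurd h (by omega)⟩
  | succ n ih =>
    intro hn
    obtain ⟨T, hT⟩ := ih (by omega)
    have hnk : n < k := hn
    set i₀ : Fin k := ⟨n, hnk⟩ with hi₀
    set Forb : Finset ℕ :=
      (Finset.univ.image rc) ∪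
      ((Finset.univ.filter (fun i' : Fin k => i'.val < n)).biUnion
        (fun i' => (T i').image (lc i'))) with hForb
    have hFc : (Forb.erase (rc i₀)).card + k ≤ k ^ 2 + k - 1 := by
      have hfilt : (Finset.univ.filter (fun i' : Fin k => i'.val < n)).card ≤ n := by
        have := Finset.card_le_card_of_injOn (fun i : Fin k => i.val)
          (s := Finset.univ.filter (fun i' : Fin k => i'.val < n))
          (t := Finset.range n)
          (by intro x hx; simp at hx ⊢; exact hx)
          (by intro x _ y _ h; exact Fin.ext h)
        simpa using this
      have hbi : ((Finset.univ.filter (fun i' : Fin k => i'.val < n)).biUnion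
          (fun i' => (T i').image (lc i'))).card ≤ n * k := by
        calc _ ≤ ∑ i' ∈ Finset.univ.filter (fun i' : Fin k => i'.val < n),
              ((T i').image (lc i')).card := Finset.card_biUnion_le
        _ ≤ ∑ i' ∈ Finset.univ.filter (fun i' : Fin k => i'.val < n), k := by
              apply Finset.sum_le_sum
              intro i' hi'
              simp only [Finset.mem_filter] at hi'
              calc ((T i').image (lc i')).card ≤ (T i').card := Finset.card_image_le
              _ = k := (hT i' hi'.2).1
        _ ≤ n * k := by rw [Finset.sum_const, smul_eq_mul]; exact Nat.mul_le_mul_right k hfilt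
      have h1 : Forb.card ≤ k + n * k := by
        calc Forb.card ≤ (Finset.univ.image rc).card + _ := Finset.card_union_le _ _
        _ ≤ k + n * k := by
            refine Nat.add_le_add ?_ hbi
            calc (Finset.univ.image rc).card ≤ (Finset.univ : Finset (Fin k)).card :=
              Finset.card_image_le
            _ = k := by simp
      have h2 : rc i₀ ∈ Forb := by
        rw [hForb]
        exact Finset.mem_union_left _ (Finset.mem_image_of_mem rc (Finset.mem_univ i₀))
      have h3 : (Forb.erase (rc i₀)).card = Forb.card - 1 := Finset.card_erase_of_mem h2
      have hnk' : n * k ≤ (k - 1) * k := Nat.mul_le_mul_right k (by omega)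
      have hkk : k ^ 2 + k - 1 = k * k + k - 1 := by rw [sq]
      have h5 : 1 ≤ Forb.card := Finset.card_pos.2 ⟨_, h2⟩
      have h7 : k ≤ k * k := Nat.le_mul_of_pos_left k (by omega)
      have hA : Forb.card ≤ k * k := by
        refine le_trans h1 ?_
        have h6 : (k - 1) * k = k * k - k := by rw [Nat.sub_mul, one_mul]
        omega
      rw [hkk, h3]
      omega
    obtain ⟨S, hScard, hS⟩ := exists_avoid_s19 (lc i₀) (hlcinj i₀) Forb (rc i₀) (hlr i₀) hFc
    refine ⟨Function.update T i₀ S, fun i hi => ?_⟩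
    rcases Nat.lt_succ_iff_lt_or_eq.1 hi with h | h
    · have hne : i ≠ i₀ := by
        intro e; rw [e] at h; simp [hi₀] at h
      rw [Function.update_of_ne hne]
      obtain ⟨h1, h2, h3⟩ := hT i h
      refine ⟨h1, h2, fun i' hi' j hj j' hj' => ?_⟩
      have hne' : i' ≠ i₀ := by
        intro e; rw [e] at hi'; simp [hi₀] at hi'; omega
      rw [Function.update_of_ne hne'] at hj'
      exact h3 i' hi' j hj j' hj'
    · have heq : i = i₀ := Fin.ext h
      subst heq
      rw [Function.update_self]
      refine ⟨hScard, ?_, ?_⟩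
      · intro j hj i' heq
        exact hS j hj (heq ▸ Finset.mem_union_left _
          (Finset.mem_image_of_mem rc (Finset.mem_univ i')))
      · intro i' hi' j hj j' hj'
        have hi'n : i'.val < n := by simpa [hi₀] using hi'
        have hne' : i' ≠ i₀ := by intro e; rw [e] at hi'; exact lt_irrefl _ hi'
        rw [Function.update_of_ne hne'] at hj'
        intro heq
        apply hS j hj
        rw [heq]
        refine Finset.mem_union_right _ (Finset.mem_biUnion.2
          ⟨i', Finset.mem_filter.2 ⟨Finset.mem_univ _, hi'n⟩,
            Finset.mem_image_of_mem _ hj'⟩)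

lemma depth2Tree_mem_edgeSet {k m : ℕ} (e : Sym2 (Unit ⊕ Fin k ⊕ Fin k × Fin m)) :
    e ∈ (depth2Tree k m).edgeSet ↔
      (∃ i : Fin k, e = s(Sum.inl (), Sum.inr (Sum.inl i))) ∨
      ∃ (i : Fin k) (j : Fin m), e = s(Sum.inr (Sum.inl i), Sum.inr (Sum.inr (i, j))) := by
  rw [depth2Tree, edgeSet_fromEdgeSet]
  constructor
  · rintro ⟨h, -⟩; exact h
  · intro h
    refine ⟨h, ?_⟩
    rcases h with ⟨i, rfl⟩ | ⟨i, j, rfl⟩ <;> simp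

/-- For `k ≥ 2`, every proper edge coloring of the depth-2 tree
`T'(k,2)` (root with `k` children, each with `k² + k − 1` pendant leaves) contains a
rainbow copy of the perfect `k`-ary tree `T(k,2)` of depth 2. -/
theorem kary_aug_rainbow (k : ℕ) (hk : 2 ≤ k)
    (c : Sym2 (Unit ⊕ Fin k ⊕ Fin k × Fin (k ^ 2 + k - 1)) → ℕ)
    (hc : IsProperEdgeColoring (depth2Tree k (k ^ 2 + k - 1)) c) :
    ContainsRainbowCopy (depth2Tree k k) (depth2Tree k (k ^ 2 + k - 1)) c := by
  classical
  set rc : Fin k → ℕ := fun i => c s(Sum.inl (), Sum.inr (Sum.inl i)) with hrcdef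
  set lc : Fin k → Fin (k ^ 2 + k - 1) → ℕ :=
    fun i j => c s(Sum.inr (Sum.inl i), Sum.inr (Sum.inr (i, j))) with hlcdef
  have hmemR : ∀ i : Fin k,
      s(Sum.inl (), Sum.inr (Sum.inl i)) ∈ (depth2Tree k (k ^ 2 + k - 1)).edgeSet :=
    fun i => (depth2Tree_mem_edgeSet _).2 (Or.inl ⟨i, rfl⟩)
  have hmemL : ∀ (i : Fin k) (j : Fin (k ^ 2 + k - 1)),
      s(Sum.inr (Sum.inl i), Sum.inr (Sum.inr (i, j))) ∈
        (depth2Tree k (k ^ 2 + k - 1)).edgeSet :=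
    fun i j => (depth2Tree_mem_edgeSet _).2 (Or.inr ⟨i, j, rfl⟩)
  have hrcinj : Function.Injective rc := by
    intro i i' h
    by_contra hne
    exact hc _ (hmemR i) _ (hmemR i') (by simp [Sym2.eq_iff, hne])
      ⟨Sum.inl (), by simp, by simp⟩ h
  have hlcinj : ∀ i, Function.Injective (lc i) := by
    intro i j j' h
    by_contra hne
    exact hc _ (hmemL i j) _ (hmemL i j') (by simp [Sym2.eq_iff, hne])
      ⟨Sum.inr (Sum.inl i), by simp, by simp⟩ h
  have hlr : ∀ i j, lc i j ≠ rc i := by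
    intro i j
    exact hc _ (hmemL i j) _ (hmemR i) (by simp [Sym2.eq_iff])
      ⟨Sum.inr (Sum.inl i), by simp, by simp⟩
  obtain ⟨T, hT⟩ := greedy k hk rc lc hlcinj hlr k le_rfl
  have hTcard : ∀ i : Fin k, (T i).card = k := fun i => (hT i i.isLt).1
  have hTrc : ∀ i : Fin k, ∀ j ∈ T i, ∀ i', lc i j ≠ rc i' :=
    fun i => (hT i i.isLt).2.1
  have hTlc : ∀ i : Fin k, ∀ i' : Fin k, i'.val < i.val →
      ∀ j ∈ T i, ∀ j' ∈ T i', lc i j ≠ lc i' j' := fun i => (hT i i.isLt).2.2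
  set g : Fin k → Fin k → Fin (k ^ 2 + k - 1) :=
    fun i j => ((T i).orderIsoOfFin (hTcard i) j : Fin (k ^ 2 + k - 1)) with hgdef
  have hgmem : ∀ i j, g i j ∈ T i := fun i j => ((T i).orderIsoOfFin (hTcard i) j).2
  have hginj : ∀ i, Function.Injective (g i) := by
    intro i a b hab
    exact ((T i).orderIsoOfFin (hTcard i)).injective (Subtype.ext hab)
  set f : Unit ⊕ Fin k ⊕ Fin k × Fin k → Unit ⊕ Fin k ⊕ Fin k × Fin (k ^ 2 + k - 1) :=
    Sum.elim (fun _ => Sum.inl ()) (Sum.elim (fun i => Sum.inr (Sum.inl i))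
      (fun p => Sum.inr (Sum.inr (p.1, g p.1 p.2)))) with hfdef
  refine ⟨f, ⟨?_, ?_⟩, ?_⟩
  · -- injective
    rintro (a | a | ⟨i, j⟩) (b | b | ⟨i', j'⟩) h <;> simp [hfdef] at h ⊢
    · exact h
    · obtain ⟨h1, h2⟩ := h
      subst h1
      exact ⟨rfl, hginj i h2⟩
  · -- adjacency
    intro a b hab
    rw [← SimpleGraph.mem_edgeSet] at hab ⊢
    rw [depth2Tree_mem_edgeSet] at hab
    rw [depth2Tree_mem_edgeSet]
    rcases hab with ⟨i, hi⟩ | ⟨i, j, hij⟩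
    · rw [Sym2.eq_iff] at hi
      rcases hi with ⟨rfl, rfl⟩ | ⟨rfl, rfl⟩
      · exact Or.inl ⟨i, by simp [hfdef]⟩
      · exact Or.inl ⟨i, by simp [hfdef, Sym2.eq_iff]⟩
    · rw [Sym2.eq_iff] at hij
      rcases hij with ⟨rfl, rfl⟩ | ⟨rfl, rfl⟩
      · exact Or.inr ⟨i, g i j, by simp [hfdef]⟩
      · exact Or.inr ⟨i, g i j, by simp [hfdef, Sym2.eq_iff]⟩
  · -- rainbow
    intro e₁ he₁ e₂ he₂ hne
    rw [depth2Tree_mem_edgeSet] at he₁ he₂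
    rcases he₁ with ⟨i, rfl⟩ | ⟨i, j, rfl⟩ <;> rcases he₂ with ⟨i', rfl⟩ | ⟨i', j', rfl⟩
    · -- root root
      have hii : i ≠ i' := by rintro rfl; exact hne rfl
      simpa [hfdef, Sym2.map_pair_eq] using fun h => hii (hrcinj h)
    · -- root leaf
      have := hTrc i' (g i' j') (hgmem i' j') i
      simp only [hfdef, Sym2.map_pair_eq, Sum.elim_inl, Sum.elim_inr]
      exact fun h => this h.symm
    · -- leaf root
      have := hTrc i (g i j) (hgmem i j) i'
      simp only [hfdef, Sym2.map_pair_eq, Sum.elim_inl, Sum.elim_inr]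
      exact this
    · -- leaf leaf
      simp only [hfdef, Sym2.map_pair_eq, Sum.elim_inl, Sum.elim_inr]
      rcases eq_or_ne i i' with rfl | hii
      · have hjj : j ≠ j' := by
          rintro rfl; exact hne rfl
        exact fun h => hjj (hginj i (hlcinj i h))
      · rcases Nat.lt_or_ge i'.val i.val with hlt | hge
        · exact hTlc i i' hlt (g i j) (hgmem i j) (g i' j') (hgmem i' j')
        · have hlt : i.val < i'.val := by
            rcases Nat.lt_or_ge i.val i'.val with h | h
            · exact h
            · exact absurd (Fin.ext (le_antisymm hge h)) hii
          exact fun h =>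
            hTlc i' i hlt (g i' j') (hgmem i' j') (g i j) (hgmem i j) h.symm
end
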